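/- arXiv:2311.08611 — 14 statements merged into one kernel-verified Lean document; each statement's English description precedes it below -/
import Mathlib

section
/- Let α, c, μ, γ, p, ε, a, m, d, q be positive real constants. If (S, I, C, M, R) : ℝ → ℝ^5 is a solution of the SICMR system S' = α − cSI − μS, I' = cSI − pCI/(ε + I + aM) − γI − μI, C' = pCI/(ε + I + aM) − mC − dC − μC, M' = mC − qM − μM, R' = qM + γI − μR on [0, ∞) whose initial value lies in Ω = {(S, I, C, M, R) ∈ ℝ₊^5 : S + I + C + M + R ≤ α/μ}, then the solution remains in Ω for all t ≥ 0; that is, Ω is positively invariant for the SICMR system. -/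
open Set

lemma nonneg_of_linear_ode {x lam f : ℝ → ℝ} {T b : ℝ} (hTb : T ≤ b)
    (hlam : ContinuousOn lam (Icc T b))
    (hf : ∀ t ∈ Icc T b, 0 ≤ f t)
    (hx : ∀ t ∈ Icc T b, HasDerivAt x (f t - lam t * x t) t)
    (hx0 : 0 ≤ x T) :
    ∀ t ∈ Icc T b, 0 ≤ x t := by
  set cl : ℝ → ℝ := fun t => min (max t T) b with hcldef
  have hclcont : Continuous cl := (continuous_id.max continuous_const).min continuous_const
  have hclmem : ∀ t, cl t ∈ Icc T b :=
    fun t => ⟨le_min (le_max_right t T) hTb, min_le_right _ _⟩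
  have hcleq : ∀ t ∈ Icc T b, cl t = t := by
    intro t ht
    simp only [hcldef]
    rw [max_eq_left ht.1, min_eq_left ht.2]
  set lamc : ℝ → ℝ := fun t => lam (cl t) with hlamcdef
  have hlamc : Continuous lamc := hlam.comp_continuous hclcont hclmem
  set Λ : ℝ → ℝ := fun t => ∫ s in T..t, lamc s with hΛdef
  have hΛ : ∀ t, HasDerivAt Λ (lamc t) t := fun t =>
    intervalIntegral.integral_hasDerivAt_right (hlamc.intervalIntegrable T t)
      (hlamc.stronglyMeasurableAtFilter _ _) hlamc.continuousAt
  set g : ℝ → ℝ := fun t => Real.exp (Λ t) * x t with hgdef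
  have hg : ∀ t ∈ Icc T b, HasDerivAt g (Real.exp (Λ t) * f t) t := by
    intro t ht
    have h1 := ((hΛ t).exp.mul (hx t ht))
    have : Real.exp (Λ t) * lamc t * x t + Real.exp (Λ t) * (f t - lam t * x t)
        = Real.exp (Λ t) * f t := by
      rw [show lamc t = lam t by rw [hlamcdef]; simp only; rw [hcleq t ht]]
      ring
    rwa [this] at h1
  have hmono : MonotoneOn g (Icc T b) := by
    apply monotoneOn_of_deriv_nonneg (convex_Icc T b)
    · exact fun t ht => ((hg t ht).continuousAt).continuousWithinAt
    · intro t ht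
      rw [interior_Icc] at ht
      exact ((hg t (Ioo_subset_Icc_self ht)).differentiableAt).differentiableWithinAt
    · intro t ht
      rw [interior_Icc] at ht
      rw [(hg t (Ioo_subset_Icc_self ht)).deriv]
      exact mul_nonneg (Real.exp_pos _).le (hf t (Ioo_subset_Icc_self ht))
  intro t ht
  have h1 : g T ≤ g t := hmono (left_mem_Icc.mpr hTb) ht ht.1
  have h2 : 0 ≤ g T := mul_nonneg (Real.exp_pos _).le hx0
  have h3 : 0 ≤ Real.exp (Λ t) * x t := le_trans h2 h1
  exact nonneg_of_mul_nonneg_right h3 (Real.exp_pos _)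

/-- The region
`Ω = {(S,I,C,M,R) ∈ ℝ₊⁵ : S + I + C + M + R ≤ α/μ}` is positively invariant for
the SICMR system: any solution on `[0,∞)` whose initial value lies in `Ω`
remains in `Ω` for all `t ≥ 0`. -/
theorem sicmr_omega_positively_invariant
    (α c μ γ p ε a m d q : ℝ)
    (hα : 0 < α) (hc : 0 < c) (hμ : 0 < μ) (hγ : 0 < γ) (hp : 0 < p)
    (hε : 0 < ε) (ha : 0 < a) (hm : 0 < m) (hd : 0 < d) (hq : 0 < q)
    (S I C M R : ℝ → ℝ)
    (hS : ∀ t, 0 ≤ t → HasDerivAt S (α - c * S t * I t - μ * S t) t)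
    (hI : ∀ t, 0 ≤ t → HasDerivAt I
      (c * S t * I t - p * C t * I t / (ε + I t + a * M t) - γ * I t - μ * I t) t)
    (hC : ∀ t, 0 ≤ t → HasDerivAt C
      (p * C t * I t / (ε + I t + a * M t) - m * C t - d * C t - μ * C t) t)
    (hM : ∀ t, 0 ≤ t → HasDerivAt M (m * C t - q * M t - μ * M t) t)
    (hR : ∀ t, 0 ≤ t → HasDerivAt R (q * M t + γ * I t - μ * R t) t)
    (h0 : 0 ≤ S 0 ∧ 0 ≤ I 0 ∧ 0 ≤ C 0 ∧ 0 ≤ M 0 ∧ 0 ≤ R 0 ∧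
      S 0 + I 0 + C 0 + M 0 + R 0 ≤ α / μ) :
    ∀ t, 0 ≤ t → 0 ≤ S t ∧ 0 ≤ I t ∧ 0 ≤ C t ∧ 0 ≤ M t ∧ 0 ≤ R t ∧
      S t + I t + C t + M t + R t ≤ α / μ := by
  obtain ⟨hS0, hI0, hC0, hM0, hR0, hN0⟩ := h0
  have contS : ∀ t, 0 ≤ t → ContinuousAt S t := fun t ht => (hS t ht).continuousAt
  have contI : ∀ t, 0 ≤ t → ContinuousAt I t := fun t ht => (hI t ht).continuousAt
  have contC : ∀ t, 0 ≤ t → ContinuousAt C t := fun t ht => (hC t ht).continuousAt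
  have contM : ∀ t, 0 ≤ t → ContinuousAt M t := fun t ht => (hM t ht).continuousAt
  have contR : ∀ t, 0 ≤ t → ContinuousAt R t := fun t ht => (hR t ht).continuousAt
  -- Step 1 : nonnegativity
  have nonneg : ∀ t, 0 ≤ t → 0 ≤ S t ∧ 0 ≤ I t ∧ 0 ≤ C t ∧ 0 ≤ M t ∧ 0 ≤ R t := by
    by_contra hbad
    obtain ⟨t₁, ht₁'⟩ := not_forall.mp hbad
    obtain ⟨ht₁, hbad₁⟩ := Classical.not_imp.mp ht₁'
    set B : Set ℝ := {t : ℝ | 0 ≤ t ∧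
        ¬ (0 ≤ S t ∧ 0 ≤ I t ∧ 0 ≤ C t ∧ 0 ≤ M t ∧ 0 ≤ R t)} with hBdef
    have hBne : B.Nonempty := ⟨t₁, ht₁, hbad₁⟩
    have hBbdd : BddBelow B := ⟨0, fun u hu => hu.1⟩
    set T : ℝ := sInf B with hTdef
    have hT0 : 0 ≤ T := le_csInf hBne (fun u hu => hu.1)
    have good_before : ∀ s, 0 ≤ s → s < T →
        0 ≤ S s ∧ 0 ≤ I s ∧ 0 ≤ C s ∧ 0 ≤ M s ∧ 0 ≤ R s := by
      intro s hs hsT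
      by_contra h
      exact absurd (csInf_le hBbdd (⟨hs, h⟩ : s ∈ B)) (not_le.mpr hsT)
    have key : ∀ x : ℝ → ℝ, (∀ t, 0 ≤ t → ContinuousAt x t) → 0 ≤ x 0 →
        (∀ s, 0 ≤ s → s < T → 0 ≤ x s) → 0 ≤ x T := by
      intro x hxc hx0 hprev
      rcases hT0.lt_or_eq with hTpos | hTeq
      · have hlim : Filter.Tendsto x (nhdsWithin T (Iio T)) (nhds (x T)) :=
          ((hxc T hT0).continuousWithinAt)
        refine ge_of_tendsto hlim ?_
        have hmem : Ioo 0 T ∈ nhdsWithin T (Iio T) :=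
          Ioo_mem_nhdsLT_of_mem ⟨hTpos, le_refl T⟩
        exact Filter.eventually_of_mem hmem (fun s hs => hprev s hs.1.le hs.2)
      · rw [← hTeq]; exact hx0
    have goodS : 0 ≤ S T := key S contS hS0 (fun s hs h => (good_before s hs h).1)
    have goodI : 0 ≤ I T := key I contI hI0 (fun s hs h => (good_before s hs h).2.1)
    have goodC : 0 ≤ C T := key C contC hC0 (fun s hs h => (good_before s hs h).2.2.1)
    have goodM : 0 ≤ M T := key M contM hM0 (fun s hs h => (good_before s hs h).2.2.2.1)
    have goodR : 0 ≤ R T := key R contR hR0 (fun s hs h => (good_before s hs h).2.2.2.2)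
    -- denominator bounded below near T
    set D : ℝ → ℝ := fun t => ε + I t + a * M t with hDdef
    have hDT : ε / 2 < D T := by
      have : 0 ≤ a * M T := mul_nonneg ha.le goodM
      simp only [hDdef]; linarith
    have hDcont : ContinuousAt D T := by
      exact (continuousAt_const.add (contI T hT0)).add (continuousAt_const.mul (contM T hT0))
    have hev : D ⁻¹' {y | ε / 2 < y} ∈ nhds T := hDcont (lt_mem_nhds hDT)
    obtain ⟨δ, hδpos, hδ⟩ := Metric.mem_nhds_iff.mp hev
    set b : ℝ := T + δ / 2 with hbdef
    have hTb : T ≤ b := by simp only [hbdef]; linarith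
    have hIcc0 : ∀ t ∈ Icc T b, (0:ℝ) ≤ t := fun t ht => hT0.trans ht.1
    have hDpos : ∀ t ∈ Icc T b, ε / 2 < D t := by
      intro t ht
      apply hδ
      rw [Metric.mem_ball, Real.dist_eq, abs_of_nonneg (sub_nonneg.mpr ht.1)]
      have := ht.2; simp only [hbdef] at this; linarith
    have hDne : ∀ t ∈ Icc T b, D t ≠ 0 := fun t ht => (lt_trans (by linarith) (hDpos t ht)).ne'
    have hScont : ContinuousOn S (Icc T b) :=
      fun t ht => (contS t (hIcc0 t ht)).continuousWithinAt
    have hIcont : ContinuousOn I (Icc T b) :=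
      fun t ht => (contI t (hIcc0 t ht)).continuousWithinAt
    have hCcont : ContinuousOn C (Icc T b) :=
      fun t ht => (contC t (hIcc0 t ht)).continuousWithinAt
    have hMcont : ContinuousOn M (Icc T b) :=
      fun t ht => (contM t (hIcc0 t ht)).continuousWithinAt
    have hDcontOn : ContinuousOn D (Icc T b) :=
      (continuousOn_const.add hIcont).add (continuousOn_const.mul hMcont)
    -- S nonneg on [T,b]
    have hSnn : ∀ t ∈ Icc T b, 0 ≤ S t := by
      apply nonneg_of_linear_ode (lam := fun t => c * I t + μ) (f := fun _ => α) hTb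
      · exact (continuousOn_const.mul hIcont).add continuousOn_const
      · exact fun t _ => hα.le
      · intro t ht
        have := hS t (hIcc0 t ht)
        convert this using 1; ring
      · exact goodS
    -- I nonneg on [T,b]
    have hInn : ∀ t ∈ Icc T b, 0 ≤ I t := by
      apply nonneg_of_linear_ode
        (lam := fun t => p * C t / D t + γ + μ - c * S t) (f := fun _ => (0:ℝ)) hTb
      · exact ((((continuousOn_const.mul hCcont).div hDcontOn hDne).add
          continuousOn_const).add continuousOn_const).sub (continuousOn_const.mul hScont)
      · exact fun t _ => le_refl 0
      · intro t ht
        have := hI t (hIcc0 t ht)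
        convert this using 1
        simp only [hDdef]
        ring
      · exact goodI
    -- C nonneg on [T,b]
    have hCnn : ∀ t ∈ Icc T b, 0 ≤ C t := by
      apply nonneg_of_linear_ode
        (lam := fun t => m + d + μ - p * I t / D t) (f := fun _ => (0:ℝ)) hTb
      · exact continuousOn_const.sub ((continuousOn_const.mul hIcont).div hDcontOn hDne)
      · exact fun t _ => le_refl 0
      · intro t ht
        have := hC t (hIcc0 t ht)
        convert this using 1
        simp only [hDdef]
        ring
      · exact goodC
    -- M nonneg on [T,b]
    have hMnn : ∀ t ∈ Icc T b, 0 ≤ M t := by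
      apply nonneg_of_linear_ode
        (lam := fun _ => q + μ) (f := fun t => m * C t) hTb
      · exact continuousOn_const
      · exact fun t ht => mul_nonneg hm.le (hCnn t ht)
      · intro t ht
        have := hM t (hIcc0 t ht)
        convert this using 1; ring
      · exact goodM
    -- R nonneg on [T,b]
    have hRnn : ∀ t ∈ Icc T b, 0 ≤ R t := by
      apply nonneg_of_linear_ode
        (lam := fun _ => μ) (f := fun t => q * M t + γ * I t) hTb
      · exact continuousOn_const
      · exact fun t ht => add_nonneg (mul_nonneg hq.le (hMnn t ht))
          (mul_nonneg hγ.le (hInn t ht))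
      · intro t ht
        exact hR t (hIcc0 t ht)
      · exact goodR
    -- contradiction
    have hTlt : T < b := by simp only [hbdef]; linarith
    obtain ⟨u, huB, hub⟩ := (csInf_lt_iff hBbdd hBne).mp hTlt
    have huT : T ≤ u := csInf_le hBbdd huB
    have hu : u ∈ Icc T b := ⟨huT, hub.le⟩
    exact huB.2 ⟨hSnn u hu, hInn u hu, hCnn u hu, hMnn u hu, hRnn u hu⟩
  -- Step 2 : the sum bound
  have sumbound : ∀ t, 0 ≤ t → S t + I t + C t + M t + R t ≤ α / μ := by
    set g : ℝ → ℝ :=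
      fun t => (S t + I t + C t + M t + R t - α / μ) * Real.exp (μ * t) with hgdef
    have hg : ∀ t, 0 ≤ t → HasDerivAt g (-(d * C t) * Real.exp (μ * t)) t := by
      intro t ht
      have hN : HasDerivAt (fun t => S t + I t + C t + M t + R t - α / μ)
          ((α - c * S t * I t - μ * S t) +
            (c * S t * I t - p * C t * I t / (ε + I t + a * M t) - γ * I t - μ * I t) +
            (p * C t * I t / (ε + I t + a * M t) - m * C t - d * C t - μ * C t) +
            (m * C t - q * M t - μ * M t) + (q * M t + γ * I t - μ * R t)) t :=
        (((((hS t ht).add (hI t ht)).add (hC t ht)).add (hM t ht)).add (hR t ht)).sub_const _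
      have hE : HasDerivAt (fun t => Real.exp (μ * t)) (Real.exp (μ * t) * (μ * 1)) t :=
        ((hasDerivAt_id t).const_mul μ).exp
      have := hN.mul hE
      refine this.congr_deriv ?_
      field_simp [hμ.ne']
      ring
    have hanti : AntitoneOn g (Ici 0) := by
      apply antitoneOn_of_deriv_nonpos (convex_Ici 0)
      · exact fun t ht => ((hg t ht).continuousAt).continuousWithinAt
      · intro t ht
        rw [interior_Ici] at ht
        exact ((hg t ht.le).differentiableAt).differentiableWithinAt
      · intro t ht
        rw [interior_Ici] at ht
        rw [(hg t ht.le).deriv]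
        have hC0 : 0 ≤ C t := (nonneg t ht.le).2.2.1
        have : 0 ≤ d * C t := mul_nonneg hd.le hC0
        have := Real.exp_pos (μ * t)
        nlinarith
    intro t ht
    have h1 : g t ≤ g 0 := hanti (self_mem_Ici) ht ht
    have h2 : g 0 ≤ 0 := by
      simp only [hgdef, mul_zero, Real.exp_zero, mul_one]
      linarith
    have h3 : (S t + I t + C t + M t + R t - α / μ) * Real.exp (μ * t) ≤ 0 :=
      le_trans h1 h2
    nlinarith [Real.exp_pos (μ * t)]
  intro t ht
  obtain ⟨h1, h2, h3, h4, h5⟩ := nonneg t ht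
  exact ⟨h1, h2, h3, h4, h5, sumbound t ht⟩
end

section
/- Let α, c, μ, γ, p, m, d, q be positive real constants and let F and V be the 3×3 real matrices F = [[cα/μ, 0, 0], [0, 0, 0], [0, m, 0]] and V = diag(μ+γ, m+d+μ, q+μ). Then F·V⁻¹ = [[cα/(μ(μ+γ)), 0, 0], [0, 0, 0], [0, m/(m+d+μ), 0]], and the spectral radius of F·V⁻¹ equals cα/(μ(μ+γ)). -/
lemma spectrum_lower (r s : ℝ) :
    spectrum ℝ (!![r, 0, 0; 0, 0, 0; 0, s, 0] : Matrix (Fin 3) (Fin 3) ℝ) = {0, r} := by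
  ext k
  rw [spectrum.mem_iff, Matrix.isUnit_iff_isUnit_det, isUnit_iff_ne_zero]
  have h : algebraMap ℝ (Matrix (Fin 3) (Fin 3) ℝ) k - !![r, 0, 0; 0, 0, 0; 0, s, 0]
      = !![k - r, 0, 0; 0, k, 0; 0, -s, k] := by
    ext i j
    fin_cases i <;> fin_cases j <;>
      simp [Matrix.algebraMap_matrix_apply, Matrix.vecHead, Matrix.vecTail]
  have hdet : Matrix.det !![k - r, 0, 0; 0, k, 0; 0, -s, k] = (k - r) * k * k := by
    rw [Matrix.det_fin_three]
    simp
  rw [h, hdet]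
  simp only [ne_eq, not_not, Set.mem_insert_iff, Set.mem_singleton_iff, mul_eq_zero,
    sub_eq_zero]
  tauto

/-- For the SICMR model, with the new-infection matrix `F` and
transition matrix `V` at the disease-free equilibrium, the next-generation
matrix is `F * V⁻¹` as displayed, and its spectral radius (the basic
reproduction number) equals `cα/(μ(μ+γ))`. -/
theorem sicmr_next_generation_matrix_and_R0
    (α c μ γ p m d q : ℝ)
    (hα : 0 < α) (hc : 0 < c) (hμ : 0 < μ) (hγ : 0 < γ) (hp : 0 < p)
    (hm : 0 < m) (hd : 0 < d) (hq : 0 < q)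
    (F V : Matrix (Fin 3) (Fin 3) ℝ)
    (hF : F = !![c * α / μ, 0, 0; 0, 0, 0; 0, m, 0])
    (hV : V = !![μ + γ, 0, 0; 0, m + d + μ, 0; 0, 0, q + μ]) :
    F * V⁻¹ = !![c * α / (μ * (μ + γ)), 0, 0; 0, 0, 0; 0, m / (m + d + μ), 0] ∧
    spectralRadius ℝ (F * V⁻¹) = ENNReal.ofReal (c * α / (μ * (μ + γ))) := by
  have h1 : (0:ℝ) < μ + γ := by linarith
  have h2 : (0:ℝ) < m + d + μ := by linarith
  have h3 : (0:ℝ) < q + μ := by linarith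
  have hVinv : V⁻¹ = !![(μ + γ)⁻¹, 0, 0; 0, (m + d + μ)⁻¹, 0; 0, 0, (q + μ)⁻¹] := by
    apply Matrix.inv_eq_right_inv
    rw [hV, Matrix.mul_fin_three, Matrix.one_fin_three]
    norm_num [mul_inv_cancel₀ h1.ne', mul_inv_cancel₀ h2.ne', mul_inv_cancel₀ h3.ne']
  have hprod : F * V⁻¹ = !![c * α / (μ * (μ + γ)), 0, 0; 0, 0, 0; 0, m / (m + d + μ), 0] := by
    rw [hF, hVinv, Matrix.mul_fin_three]
    ext i j
    fin_cases i <;> fin_cases j <;> norm_num <;> field_simp <;> ring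
  refine ⟨hprod, ?_⟩
  rw [hprod]
  have hr : (0:ℝ) ≤ c * α / (μ * (μ + γ)) := by positivity
  rw [spectralRadius, spectrum_lower]
  rw [iSup_pair]
  simp [← Real.enorm_eq_ofReal hr, enorm_eq_nnnorm]
end

section
/- Let α, c, μ, γ, p, ε, a, m, d, q be positive real constants and set ℛ₀ = cα/(μ(μ+γ)). If ℛ₀ > 1, then the point E₁ = ((μ+γ)/c, (μ/c)(ℛ₀ − 1), 0, 0, (γ/c)(ℛ₀ − 1)) is an equilibrium of the SICMR system, and it is the unique equilibrium with I > 0 and M = 0 (and C = 0). Conversely, if ℛ₀ ≤ 1, no equilibrium with I > 0 and C = M = 0 exists. -/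
/-- A point `(S, I, C, M, R)` is an equilibrium of the SICMR system iff all five
right-hand sides vanish. -/
def sicmrEquilibrium (α c μ γ p ε a m d q S I C M R : ℝ) : Prop :=
  α - c * S * I - μ * S = 0 ∧
  c * S * I - p * C * I / (ε + I + a * M) - γ * I - μ * I = 0 ∧
  p * C * I / (ε + I + a * M) - (m + d + μ) * C = 0 ∧
  m * C - (q + μ) * M = 0 ∧
  q * M + γ * I - μ * R = 0

lemma sicmr_aux
    (α c μ γ p ε a m d q : ℝ)
    (hc : 0 < c) (hμ : 0 < μ) (hγ : 0 < γ)
    (R₀ : ℝ) (hR₀ : R₀ = c * α / (μ * (μ + γ)))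
    (S I R : ℝ) (hI : I > 0)
    (heq : sicmrEquilibrium α c μ γ p ε a m d q S I 0 0 R) :
    S = (μ + γ) / c ∧ I = μ / c * (R₀ - 1) ∧ R = γ / c * (R₀ - 1) := by
  obtain ⟨h1, h2, h3, h4, h5⟩ := heq
  have hμγ : 0 < μ + γ := by linarith
  simp only [mul_zero, zero_mul, mul_comm, zero_div] at h2 h3 h4 h5
  have hS : S = (μ + γ) / c := by
    have : (c * S - γ - μ) * I = 0 := by linear_combination h2
    have hcs : c * S - γ - μ = 0 := by
      rcases mul_eq_zero.mp this with h | h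
      · exact h
      · exact absurd h (ne_of_gt hI)
    field_simp
    linarith
  subst hS
  have hI' : I = μ / c * (R₀ - 1) := by
    rw [hR₀]
    field_simp at h1 ⊢
    nlinarith [h1]
  refine ⟨rfl, hI', ?_⟩
  have : γ * I = μ * R := by linarith
  rw [hI'] at this
  field_simp at this ⊢
  nlinarith [this]

/-- If `ℛ₀ > 1`, the boundary (testing-free) point
`E₁ = ((μ+γ)/c, (μ/c)(ℛ₀−1), 0, 0, (γ/c)(ℛ₀−1))` is an equilibrium of the SICMR
system and is the unique equilibrium with `I > 0`, `C = 0`, `M = 0`.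
Conversely, if `ℛ₀ ≤ 1`, there is no equilibrium with `I > 0` and `C = M = 0`. -/
theorem sicmr_boundary_equilibrium
    (α c μ γ p ε a m d q : ℝ)
    (hα : 0 < α) (hc : 0 < c) (hμ : 0 < μ) (hγ : 0 < γ) (hp : 0 < p)
    (hε : 0 < ε) (ha : 0 < a) (hm : 0 < m) (hd : 0 < d) (hq : 0 < q)
    (R₀ : ℝ) (hR₀ : R₀ = c * α / (μ * (μ + γ))) :
    (R₀ > 1 →
      sicmrEquilibrium α c μ γ p ε a m d q
        ((μ + γ) / c) (μ / c * (R₀ - 1)) 0 0 (γ / c * (R₀ - 1)) ∧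
      ∀ S I C M R : ℝ, I > 0 → C = 0 → M = 0 →
        sicmrEquilibrium α c μ γ p ε a m d q S I C M R →
        (S, I, C, M, R) =
          ((μ + γ) / c, μ / c * (R₀ - 1), 0, 0, γ / c * (R₀ - 1))) ∧
    (R₀ ≤ 1 →
      ¬ ∃ S I C M R : ℝ, I > 0 ∧ C = 0 ∧ M = 0 ∧
        sicmrEquilibrium α c μ γ p ε a m d q S I C M R) := by
  have hμγ : 0 < μ + γ := by linarith
  constructor
  · intro hR
    constructor
    · refine ⟨?_, ?_, ?_, ?_, ?_⟩
      · rw [hR₀]; field_simp; ring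
      · simp only [mul_zero, zero_mul, zero_div]; field_simp; ring
      · simp
      · simp
      · ring
    · intro S I C M R hI hC hM heq
      subst hC; subst hM
      obtain ⟨hS, hI', hR'⟩ :=
        sicmr_aux α c μ γ p ε a m d q hc hμ hγ R₀ hR₀ S I R hI heq
      simp [hS, hI', hR']
  · intro hR ⟨S, I, C, M, R, hI, hC, hM, heq⟩
    subst hC; subst hM
    obtain ⟨hS, hI', hR'⟩ :=
      sicmr_aux α c μ γ p ε a m d q hc hμ hγ R₀ hR₀ S I R hI heq
    have : I ≤ 0 := by
      rw [hI']
      have : R₀ - 1 ≤ 0 := by linarith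
      have h2 : 0 < μ / c := div_pos hμ hc
      nlinarith
    linarith
end

section
/- Let α, c, μ, γ, p, ε, a, m, d, q be positive real constants. If p ≤ m + d + μ, then the SICMR system has no interior equilibrium; that is, there is no point (S, I, C, M, R) with all coordinates strictly positive satisfying α − cSI − μS = 0, cS − pC/(ε + I + aM) − γ − μ = 0, pCI/(ε + I + aM) − (m + d + μ)C = 0, mC − (q + μ)M = 0, and qM + γI − μR = 0. -/
/-- If `p ≤ m + d + μ`, the SICMR system has no interior
equilibrium, i.e. no equilibrium with all five coordinates strictly positive. -/
theorem sicmr_no_interior_equilibrium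
    (α c μ γ p ε a m d q : ℝ)
    (hα : 0 < α) (hc : 0 < c) (hμ : 0 < μ) (hγ : 0 < γ) (hp : 0 < p)
    (hε : 0 < ε) (ha : 0 < a) (hm : 0 < m) (hd : 0 < d) (hq : 0 < q)
    (hple : p ≤ m + d + μ) :
    ¬ ∃ S I C M R : ℝ, 0 < S ∧ 0 < I ∧ 0 < C ∧ 0 < M ∧ 0 < R ∧
      α - c * S * I - μ * S = 0 ∧
      c * S - p * C / (ε + I + a * M) - γ - μ = 0 ∧
      p * C * I / (ε + I + a * M) - (m + d + μ) * C = 0 ∧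
      m * C - (q + μ) * M = 0 ∧
      q * M + γ * I - μ * R = 0 := by
  rintro ⟨S, I, C, M, R, hS, hI, hC, hM, hR, _, _, h3, _, _⟩
  have hD : 0 < ε + I + a * M := by positivity
  have h3' : p * C * I = (m + d + μ) * C * (ε + I + a * M) := by
    field_simp at h3
    linarith [h3]
  have h1 : p * I ≥ p * (ε + I + a * M) := by
    have := mul_le_mul_of_nonneg_right hple (le_of_lt (mul_pos hC hD))
    nlinarith [h3']
  nlinarith [mul_pos ha hM, mul_pos hp (mul_pos ha hM)]
end

section
/- Let a₂, a₁, a₀ be real numbers with a₂ > 0 arising as the quadratic coefficients for the interior equilibrium of the SICMR model (with positive parameters and p > m + d + μ), so that a₁ > (a/ε)·a₀ holds. Then: (i) if a₀ ≥ 0 (equivalently ℛ₀ ≤ 1 + εbc/(aμ)), the quadratic f(M) = a₂M² + a₁M + a₀ has no root M > 0; (ii) if a₀ < 0 (equivalently ℛ₀ > 1 + εbc/(aμ)), f has exactly one root M* > 0. -/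
private lemma quad_unique_pos_root (A B C : ℝ) (hA : 0 < A) (hC : C < 0) :
    ∃! M : ℝ, 0 < M ∧ A * M ^ 2 + B * M + C = 0 := by
  have hDpos : 0 < B ^ 2 - 4 * A * C := by nlinarith
  obtain ⟨s, hsa, hs2⟩ : ∃ s : ℝ, B < s ∧ s ^ 2 = B ^ 2 - 4 * A * C := by
    refine ⟨Real.sqrt (B ^ 2 - 4 * A * C), ?_, Real.sq_sqrt hDpos.le⟩
    nlinarith [Real.sqrt_nonneg (B ^ 2 - 4 * A * C), Real.sq_sqrt hDpos.le]
  have hMpos : 0 < (s - B) / (2 * A) := div_pos (by linarith) (by linarith)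
  have hMroot : A * ((s - B) / (2 * A)) ^ 2 + B * ((s - B) / (2 * A)) + C = 0 := by
    have h2 : (2 * A) ≠ 0 := by positivity
    field_simp
    nlinarith [hs2]
  refine ⟨(s - B) / (2 * A), ⟨hMpos, hMroot⟩, ?_⟩
  rintro N ⟨hN, hNroot⟩
  set M := (s - B) / (2 * A) with hMdef
  have hfac : (N - M) * (A * (N + M) + B) = 0 := by nlinarith
  have h1 : 0 < A * M + B := by nlinarith
  have hchain : 0 < A * (N + M) + B := by nlinarith [mul_pos hA hN]
  rcases mul_eq_zero.mp hfac with h | h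
  · linarith
  · linarith

/-- For the quadratic `f(M) = a₂M² + a₁M + a₀` whose
coefficients arise from the interior-equilibrium analysis of the SICMR model
(positive parameters, `p > m + d + μ`), so that `a₂ > 0` and
`a₁ > (a/ε)·a₀`: if `a₀ ≥ 0` (equivalently `ℛ₀ ≤ 1 + εbc/(aμ)`) there is no
positive root, while if `a₀ < 0` (equivalently `ℛ₀ > 1 + εbc/(aμ)`) there is
exactly one positive root. -/
theorem sicmr_quadratic_positive_roots
    (α c μ γ p ε a m d q : ℝ)
    (hα : 0 < α) (hc : 0 < c) (hμ : 0 < μ) (hγ : 0 < γ) (hp : 0 < p)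
    (hε : 0 < ε) (ha : 0 < a) (hm : 0 < m) (hd : 0 < d) (hq : 0 < q)
    (hpm : p > m + d + μ)
    (b R₀ a₂ a₁ a₀ : ℝ)
    (hb : b = a * (m + d + μ) / (p - m - d - μ))
    (hR₀ : R₀ = c * α / (μ * (μ + γ)))
    (ha₂ : a₂ = (q + μ) * (m + d + μ) / m + (μ + γ) * b)
    (ha₁ : a₁ = (q + μ) * (m + d + μ) / m * (ε / a + μ / (b * c)) +
      2 * ε * b * (μ + γ) / a + μ * (μ + γ) / c - α)
    (ha₀ : a₀ = ε / a * (ε * b * (μ + γ) / a + μ * (μ + γ) / c - α)) :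
    (0 ≤ a₀ → ¬ ∃ M : ℝ, 0 < M ∧ a₂ * M ^ 2 + a₁ * M + a₀ = 0) ∧
    (a₀ < 0 → ∃! M : ℝ, 0 < M ∧ a₂ * M ^ 2 + a₁ * M + a₀ = 0) := by
  have hbpos : 0 < b := by
    rw [hb]; apply div_pos (by positivity); linarith
  have ha2 : 0 < a₂ := by
    rw [ha₂]; positivity
  -- a₁ = (a/ε)·a₀ + positive stuff
  have hkey : a₁ - a / ε * a₀ =
      (q + μ) * (m + d + μ) / m * (ε / a + μ / (b * c)) + ε * b * (μ + γ) / a := by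
    rw [ha₁, ha₀]
    field_simp
    ring
  have hRpos : 0 < (q + μ) * (m + d + μ) / m * (ε / a + μ / (b * c)) + ε * b * (μ + γ) / a := by
    positivity
  have hgt : a / ε * a₀ < a₁ := by linarith
  constructor
  · rintro h0 ⟨M, hM, hroot⟩
    have ha1 : 0 < a₁ := by
      have : 0 ≤ a / ε * a₀ := by positivity
      linarith
    nlinarith [sq_nonneg M, mul_pos ha2 (mul_pos hM hM), mul_pos ha1 hM]
  · intro h0
    exact quad_unique_pos_root a₂ a₁ a₀ ha2 h0
end

section
/- Let α, c, μ, γ, p, ε, a, m, d, q be positive reals with p > m + d + μ, set b = a(m+d+μ)/(p−m−d−μ) and ℛ₀ = cα/(μ(μ+γ)), and assume ℛ₀ > 1 + εbc/(aμ). Then the SICMR system admits a unique interior equilibrium E* = (S*, I*, C*, M*, R*) with all coordinates positive, given by S* = α/(cb(M* + ε/a) + μ), I* = b(M* + ε/a), C* = ((q+μ)/m)·M*, R* = (1/μ)(qM* + γI*), where M* is the unique positive root of a₂M² + a₁M + a₀ = 0 with a₂ = (q+μ)(m+d+μ)/m + (μ+γ)b, a₁ = (q+μ)(m+d+μ)/m·(ε/a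 + μ/(bc)) + 2εb(μ+γ)/a + μ(μ+γ)/c − α, a₀ = (ε/a)(εb(μ+γ)/a + μ(μ+γ)/c − α). -/
set_option maxHeartbeats 1000000 in
/-- If `p > m + d + μ` and `ℛ₀ > 1 + εbc/(aμ)`, the SICMR
system admits a unique interior equilibrium `E* = (S*, I*, C*, M*, R*)`, given
explicitly in terms of the unique positive root `M*` of the quadratic
`a₂M² + a₁M + a₀ = 0`. -/
theorem sicmr_interior_equilibrium_exists_unique
    (α c μ γ p ε a m d q : ℝ)
    (hα : 0 < α) (hc : 0 < c) (hμ : 0 < μ) (hγ : 0 < γ) (hp : 0 < p)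
    (hε : 0 < ε) (ha : 0 < a) (hm : 0 < m) (hd : 0 < d) (hq : 0 < q)
    (hpm : p > m + d + μ)
    (b R₀ a₂ a₁ a₀ : ℝ)
    (hb : b = a * (m + d + μ) / (p - m - d - μ))
    (hR₀ : R₀ = c * α / (μ * (μ + γ)))
    (ha₂ : a₂ = (q + μ) * (m + d + μ) / m + (μ + γ) * b)
    (ha₁ : a₁ = (q + μ) * (m + d + μ) / m * (ε / a + μ / (b * c)) +
      2 * ε * b * (μ + γ) / a + μ * (μ + γ) / c - α)
    (ha₀ : a₀ = ε / a * (ε * b * (μ + γ) / a + μ * (μ + γ) / c - α))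
    (hR₀gt : R₀ > 1 + ε * b * c / (a * μ)) :
    ∃ Mstar Sstar Istar Cstar Rstar : ℝ,
      0 < Mstar ∧ a₂ * Mstar ^ 2 + a₁ * Mstar + a₀ = 0 ∧
      (∀ M' : ℝ, 0 < M' → a₂ * M' ^ 2 + a₁ * M' + a₀ = 0 → M' = Mstar) ∧
      Sstar = α / (c * b * (Mstar + ε / a) + μ) ∧
      Istar = b * (Mstar + ε / a) ∧
      Cstar = (q + μ) / m * Mstar ∧
      Rstar = 1 / μ * (q * Mstar + γ * Istar) ∧
      0 < Sstar ∧ 0 < Istar ∧ 0 < Cstar ∧ 0 < Rstar ∧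
      sicmrEquilibrium α c μ γ p ε a m d q Sstar Istar Cstar Mstar Rstar ∧
      (∀ S I C M R : ℝ, 0 < S → 0 < I → 0 < C → 0 < M → 0 < R →
        sicmrEquilibrium α c μ γ p ε a m d q S I C M R →
        (S, I, C, M, R) = (Sstar, Istar, Cstar, Mstar, Rstar)) := by
  have hk : (0:ℝ) < m + d + μ := by linarith
  have hpk : (0:ℝ) < p - m - d - μ := by linarith
  have hpk' : p - m - d - μ ≠ 0 := ne_of_gt hpk
  have hμγ : (0:ℝ) < μ + γ := by linarith
  have hqμ : (0:ℝ) < q + μ := by linarith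
  have hb0 : 0 < b := by rw [hb]; exact div_pos (mul_pos ha hk) hpk
  have ha₂0 : 0 < a₂ := by
    rw [ha₂]
    have h1 := div_pos (mul_pos hqμ hk) hm
    nlinarith [mul_pos hμγ hb0]
  -- a₀ < 0
  have hP : (0:ℝ) < a * μ * (μ + γ) := by positivity
  have h1 : 1 + ε * b * c / (a * μ) < c * α / (μ * (μ + γ)) := by rw [← hR₀]; exact hR₀gt
  have h2 := mul_lt_mul_of_pos_left h1 hP
  have hL : a * μ * (μ + γ) * (1 + ε * b * c / (a * μ)) =
      a * μ * (μ + γ) + (μ + γ) * (ε * b * c) := by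
    field_simp
  have hRr : a * μ * (μ + γ) * (c * α / (μ * (μ + γ))) = a * (c * α) := by
    field_simp
  rw [hL, hRr] at h2
  have hinner : ε * b * (μ + γ) / a + μ * (μ + γ) / c - α < 0 := by
    have heq : ε * b * (μ + γ) / a + μ * (μ + γ) / c - α =
        (ε * b * (μ + γ) * c + μ * (μ + γ) * a - α * (a * c)) / (a * c) := by
      field_simp
    rw [heq]
    apply div_neg_of_neg_of_pos _ (mul_pos ha hc)
    nlinarith
  have ha₀0 : a₀ < 0 := by
    rw [ha₀]; exact mul_neg_of_pos_of_neg (div_pos hε ha) hinner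
  -- the positive root of the quadratic
  have hD0 : 0 < a₁ ^ 2 - 4 * a₂ * a₀ := by
    nlinarith [sq_nonneg a₁, mul_pos ha₂0 (neg_pos.mpr ha₀0)]
  obtain ⟨s, hs0, hs2⟩ : ∃ s : ℝ, 0 ≤ s ∧ s ^ 2 = a₁ ^ 2 - 4 * a₂ * a₀ :=
    ⟨Real.sqrt _, Real.sqrt_nonneg _, Real.sq_sqrt hD0.le⟩
  have hsa : a₁ < s := by
    by_contra h
    push_neg at h
    have h1 : s ^ 2 ≤ a₁ ^ 2 := by nlinarith
    nlinarith [mul_pos ha₂0 (neg_pos.mpr ha₀0)]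
  have h2a : (2 * a₂) ≠ 0 := by positivity
  obtain ⟨Ms, hMs2, hM0⟩ : ∃ M : ℝ, M * (2 * a₂) = s - a₁ ∧ 0 < M :=
    ⟨(s - a₁) / (2 * a₂), div_mul_cancel₀ _ h2a,
      div_pos (by linarith) (by linarith)⟩
  have hQMs : a₂ * Ms ^ 2 + a₁ * Ms + a₀ = 0 := by
    have h4 : (4 * a₂) * (a₂ * Ms ^ 2 + a₁ * Ms + a₀) = 0 := by
      linear_combination (2 * a₂ * Ms + s + a₁) * hMs2 + hs2
    exact (mul_eq_zero.mp h4).resolve_left (by positivity)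
  have huniq : ∀ M' : ℝ, 0 < M' → a₂ * M' ^ 2 + a₁ * M' + a₀ = 0 → M' = Ms := by
    intro M' hM' hQ'
    have hfac : (M' - Ms) * (a₂ * (M' + Ms) + a₁) = 0 := by
      linear_combination hQ' - hQMs
    have hpos : 0 < a₂ * (M' + Ms) + a₁ := by
      nlinarith [mul_pos (mul_pos ha₂0 hM') hM0]
    rcases mul_eq_zero.mp hfac with h | h
    · linarith
    · linarith
  -- key algebraic identity
  have key : ∀ M : ℝ,
      c * α * (b * (M + ε / a)) -
        ((m + d + μ) * ((q + μ) / m * M) + (γ + μ) * (b * (M + ε / a))) *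
          (c * (b * (M + ε / a)) + μ) =
      -(c * b) * (a₂ * M ^ 2 + a₁ * M + a₀) := by
    intro M
    rw [ha₂, ha₁, ha₀]
    field_simp
    ring
  -- identity used for the third equation
  have hIden : ∀ M : ℝ,
      p * (b * (M + ε / a)) = (m + d + μ) * (ε + b * (M + ε / a) + a * M) := by
    intro M
    rw [hb]
    field_simp
    ring
  have hMe : 0 < Ms + ε / a := by positivity
  have hI0 : 0 < b * (Ms + ε / a) := mul_pos hb0 hMe
  have hdenS : 0 < c * b * (Ms + ε / a) + μ := by positivity
  have hden3 : 0 < ε + b * (Ms + ε / a) + a * Ms := by positivity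
  have hX : 0 < c * (b * (Ms + ε / a)) + μ := by positivity
  refine ⟨Ms, α / (c * b * (Ms + ε / a) + μ), b * (Ms + ε / a), (q + μ) / m * Ms,
    1 / μ * (q * Ms + γ * (b * (Ms + ε / a))), hM0, hQMs, huniq, rfl, rfl, rfl, rfl,
    div_pos hα hdenS, hI0, mul_pos (div_pos hqμ hm) hM0, ?_, ?_, ?_⟩
  · positivity
  · -- the equilibrium equations
    have hSden : α / (c * b * (Ms + ε / a) + μ) * (c * (b * (Ms + ε / a)) + μ) = α := by
      rw [div_mul_eq_mul_div, div_eq_iff hdenS.ne']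
      ring
    have h3 : p * ((q + μ) / m * Ms) * (b * (Ms + ε / a)) /
        (ε + b * (Ms + ε / a) + a * Ms) = (m + d + μ) * ((q + μ) / m * Ms) := by
      rw [div_eq_iff hden3.ne']
      linear_combination ((q + μ) / m * Ms) * hIden Ms
    refine ⟨?_, ?_, ?_, ?_, ?_⟩
    · have hne := hdenS.ne'
      field_simp
      ring
    · rw [h3]
      have hE : (c * (α / (c * b * (Ms + ε / a) + μ)) * (b * (Ms + ε / a)) -
          (m + d + μ) * ((q + μ) / m * Ms) - γ * (b * (Ms + ε / a)) -
          μ * (b * (Ms + ε / a))) * (c * (b * (Ms + ε / a)) + μ) = 0 := by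
        linear_combination (c * (b * (Ms + ε / a))) * hSden + key Ms - (c * b) * hQMs
      exact (mul_eq_zero.mp hE).resolve_right hX.ne'
    · rw [sub_eq_zero]; exact h3
    · field_simp
      ring
    · field_simp
      ring
  · -- uniqueness of the interior equilibrium
    intro S I C M R hS hI hC hM hR heq
    obtain ⟨e1, e2, e3, e4, e5⟩ := heq
    have hden : 0 < ε + I + a * M := by positivity
    have hCeq : C = (q + μ) / m * M := by
      rw [div_mul_eq_mul_div, eq_div_iff hm.ne']
      linarith
    rw [sub_eq_zero] at e3
    have hpCI : p * C * I = (m + d + μ) * C * (ε + I + a * M) :=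
      (div_eq_iff hden.ne').mp e3
    have hpI : p * I = (m + d + μ) * (ε + I + a * M) := by
      have := mul_left_cancel₀ hC.ne' (show C * (p * I) = C * ((m + d + μ) * (ε + I + a * M)) by
        linear_combination hpCI)
      exact this
    have hIeq : I = b * (M + ε / a) := by
      rw [hb]
      field_simp
      linear_combination hpI
    have hSden : S * (c * I + μ) = α := by linear_combination -e1
    rw [e3] at e2
    have kM := key M
    rw [← hIeq, ← hCeq] at kM
    have h0 : -(c * b) * (a₂ * M ^ 2 + a₁ * M + a₀) = 0 := by
      linear_combination (-1 : ℝ) * kM + (c * I + μ) * e2 - (c * I) * hSden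
    have hQM : a₂ * M ^ 2 + a₁ * M + a₀ = 0 := by
      rcases mul_eq_zero.mp h0 with h | h
      · exfalso; exact (neg_ne_zero.mpr (mul_pos hc hb0).ne') h
      · exact h
    have hMeq : M = Ms := huniq M hM hQM
    rw [hMeq] at hIeq hCeq e5
    have hSeq : S = α / (c * b * (Ms + ε / a) + μ) := by
      rw [eq_div_iff hdenS.ne']
      linear_combination hSden - S * c * hIeq
    have hReq : R = 1 / μ * (q * Ms + γ * (b * (Ms + ε / a))) := by
      rw [one_div, inv_mul_eq_div, eq_div_iff hμ.ne']
      linear_combination -e5 + γ * hIeq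
    simp only [Prod.mk.injEq]
    exact ⟨hSeq, hIeq, hCeq, hMeq, hReq⟩
end

section
/- Let α, c, μ, γ, p, ε, a, m, d, q be positive reals with p > m + d + μ, set b = a(m+d+μ)/(p−m−d−μ), ℛ₀ = cα/(μ(μ+γ)), Δ = ℛ₀ − 1 − εbc/(aμ), and let a₂, a₁, a₀ be the quadratic coefficients a₂ = (q+μ)(m+d+μ)/m + (μ+γ)b, a₁ = (q+μ)(m+d+μ)/m·(ε/a + μ/(bc)) + 2εb(μ+γ)/a + μ(μ+γ)/c − α, a₀ = (ε/a)(εb(μ+γ)/a + μ(μ+γ)/c − α). Then the algebraic identity a₂·(μΔ/(bc))² + a₁·(μΔ/(bc)) + a₀ = ((q+μ)(m+d+μ)μ²/(m(bc)²))·ℛ₀·Δ holds. Consequently, if Δ > 0, then the unique positive root M* of a₂M² + a₁M + a₀ = 0 satisfies M* < μΔ/(bc), and hence the interior equilibrium satisfies I* = b(M* + ε/a) < I₁ = (μ/c)(ℛ₀ − 1). -/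
set_option maxHeartbeats 1000000


/-- The algebraic identity
`a₂(μΔ/(bc))² + a₁(μΔ/(bc)) + a₀ = ((q+μ)(m+d+μ)μ²/(m(bc)²))·ℛ₀·Δ` holds, and
consequently, when `Δ = ℛ₀ − 1 − εbc/(aμ) > 0`, the unique positive root `M*`
of the quadratic satisfies `M* < μΔ/(bc)`, hence
`I* = b(M* + ε/a) < I₁ = (μ/c)(ℛ₀ − 1)`. -/
theorem sicmr_interior_less_than_boundary
    (α c μ γ p ε a m d q : ℝ)
    (hα : 0 < α) (hc : 0 < c) (hμ : 0 < μ) (hγ : 0 < γ) (hp : 0 < p)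
    (hε : 0 < ε) (ha : 0 < a) (hm : 0 < m) (hd : 0 < d) (hq : 0 < q)
    (hpm : p > m + d + μ)
    (b R₀ Δ a₂ a₁ a₀ : ℝ)
    (hb : b = a * (m + d + μ) / (p - m - d - μ))
    (hR₀ : R₀ = c * α / (μ * (μ + γ)))
    (hΔ : Δ = R₀ - 1 - ε * b * c / (a * μ))
    (ha₂ : a₂ = (q + μ) * (m + d + μ) / m + (μ + γ) * b)
    (ha₁ : a₁ = (q + μ) * (m + d + μ) / m * (ε / a + μ / (b * c)) +
      2 * ε * b * (μ + γ) / a + μ * (μ + γ) / c - α)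
    (ha₀ : a₀ = ε / a * (ε * b * (μ + γ) / a + μ * (μ + γ) / c - α)) :
    a₂ * (μ * Δ / (b * c)) ^ 2 + a₁ * (μ * Δ / (b * c)) + a₀ =
      (q + μ) * (m + d + μ) * μ ^ 2 / (m * (b * c) ^ 2) * R₀ * Δ ∧
    (0 < Δ → ∀ Mstar : ℝ, 0 < Mstar → a₂ * Mstar ^ 2 + a₁ * Mstar + a₀ = 0 →
      Mstar < μ * Δ / (b * c) ∧
      b * (Mstar + ε / a) < μ / c * (R₀ - 1)) := by
  have hpm' : 0 < p - m - d - μ := by linarith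
  have hb0 : 0 < b := by rw [hb]; positivity
  have hbc : 0 < b * c := by positivity
  have hX : μ * Δ / (b * c) = μ * Δ / (b * c) := rfl
  have hkey : a₂ * (μ * Δ / (b * c)) ^ 2 + a₁ * (μ * Δ / (b * c)) + a₀ =
      (q + μ) * (m + d + μ) * μ ^ 2 / (m * (b * c) ^ 2) * R₀ * Δ := by
    subst ha₂ ha₁ ha₀ hΔ hR₀
    field_simp
    ring
  refine ⟨hkey, ?_⟩
  intro hΔpos Mstar hM hroot
  set X : ℝ := μ * Δ / (b * c) with hXdef
  have hXpos : 0 < X := by positivity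
  have hR0pos : 0 < R₀ := by rw [hR₀]; positivity
  have ha₂pos : 0 < a₂ := by rw [ha₂]; positivity
  have hfX : 0 < a₂ * X ^ 2 + a₁ * X + a₀ := by
    rw [hkey]; positivity
  have h1 : Δ * (μ * (μ + γ) / c) = α - μ * (μ + γ) / c - ε * b * (μ + γ) / a := by
    subst hΔ hR₀; field_simp
  have ha0neg : a₀ < 0 := by
    have h2 : 0 < Δ * (μ * (μ + γ) / c) := by positivity
    rw [h1] at h2
    rw [ha₀]
    have : ε * b * (μ + γ) / a + μ * (μ + γ) / c - α < 0 := by linarith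
    exact mul_neg_of_pos_of_neg (by positivity) this
  have hMX : Mstar < X := by
    by_contra hcon
    push_neg at hcon
    have h3 : (Mstar - X) * (a₂ * X * Mstar - a₀) ≥ 0 :=
      mul_nonneg (by linarith) (by nlinarith [mul_pos (mul_pos ha₂pos hXpos) hM])
    nlinarith [mul_pos hfX hM]
  constructor
  · exact hMX
  · have heq : b * (X + ε / a) = μ / c * (R₀ - 1) := by
      rw [hXdef]; subst hΔ; field_simp; ring
    calc b * (Mstar + ε / a) < b * (X + ε / a) := by
          apply mul_lt_mul_of_pos_left (by linarith) hb0
      _ = μ / c * (R₀ - 1) := heq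
end

section
/- Let α, c, μ, γ, p, ε, a, m, d, q be positive reals with ℛ₀ = cα/(μ(μ+γ)) ≤ 1. Then the disease-free equilibrium E₀ = (α/μ, 0, 0, 0, 0) is globally asymptotically stable in Ω: every solution (S, I, C, M, R) : [0, ∞) → ℝ^5 of the SICMR system with initial value in Ω = {(S, I, C, M, R) ∈ ℝ₊^5 : S + I + C + M + R ≤ α/μ} satisfies (S(t), I(t), C(t), M(t), R(t)) → E₀ as t → ∞. -/
open Filter

open Set

open Filter Set

/-- Antitone from nonpositive derivative on `Ici T`. -/
lemma sicmr_antitoneOn {x x' : ℝ → ℝ} {T : ℝ}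
    (hx : ∀ t ∈ Ici T, HasDerivAt x (x' t) t)
    (h : ∀ t ∈ Ioi T, x' t ≤ 0) : AntitoneOn x (Ici T) := by
  apply antitoneOn_of_deriv_nonpos (convex_Ici T)
  · exact fun t ht => (hx t ht).continuousAt.continuousWithinAt
  · intro t ht
    rw [interior_Ici] at ht
    exact (hx t (Set.mem_Ici.2 (Set.mem_Ioi.1 ht).le)).differentiableAt.differentiableWithinAt
  · intro t ht
    rw [interior_Ici] at ht
    rw [(hx t (Set.mem_Ici.2 (Set.mem_Ioi.1 ht).le)).deriv]
    exact h t ht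

/-- Monotone from nonnegative derivative on `Icc u s`. -/
lemma sicmr_monotoneOn {x x' : ℝ → ℝ} {u s : ℝ}
    (hx : ∀ t ∈ Icc u s, HasDerivAt x (x' t) t)
    (h : ∀ t ∈ Ioo u s, 0 ≤ x' t) : MonotoneOn x (Icc u s) := by
  apply monotoneOn_of_deriv_nonneg (convex_Icc u s)
  · exact fun t ht => (hx t ht).continuousAt.continuousWithinAt
  · intro t ht
    rw [interior_Icc] at ht
    exact (hx t ⟨ht.1.le, ht.2.le⟩).differentiableAt.differentiableWithinAt
  · intro t ht
    rw [interior_Icc] at ht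
    rw [(hx t ⟨ht.1.le, ht.2.le⟩).deriv]
    exact h t ht

/-- Nonnegativity is preserved under `x' ≥ K x` (whenever `x ≤ 0`). -/
lemma sicmr_nonneg {x x' : ℝ → ℝ} {τ K : ℝ}
    (hx : ∀ t ∈ Icc (0:ℝ) τ, HasDerivAt x (x' t) t)
    (h : ∀ t ∈ Icc (0:ℝ) τ, x t ≤ 0 → K * x t ≤ x' t)
    (h0 : 0 ≤ x 0) : ∀ t ∈ Icc (0:ℝ) τ, 0 ≤ x t := by
  by_contra hcon
  push_neg at hcon
  obtain ⟨s, hs, hxs⟩ := hcon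
  set A := {t | t ∈ Icc (0:ℝ) s ∧ 0 ≤ x t} with hA
  have hA0 : (0:ℝ) ∈ A := ⟨⟨le_refl _, hs.1⟩, h0⟩
  have hAne : A.Nonempty := ⟨0, hA0⟩
  have hAbdd : BddAbove A := ⟨s, fun t ht => ht.1.2⟩
  set u := sSup A with hu
  have hu0 : 0 ≤ u := le_csSup hAbdd hA0
  have hus : u ≤ s := csSup_le hAne fun t ht => ht.1.2
  have huIcc : u ∈ Icc (0:ℝ) τ := ⟨hu0, hus.trans hs.2⟩
  -- 0 ≤ x u by continuity
  have hxu : 0 ≤ x u := by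
    have hcl : u ∈ closure A := csSup_mem_closure hAne hAbdd
    have hne : (nhdsWithin u A).NeBot := mem_closure_iff_nhdsWithin_neBot.1 hcl
    have hten : Tendsto x (nhdsWithin u A) (nhds (x u)) :=
      ((hx u huIcc).continuousAt.continuousWithinAt : ContinuousWithinAt x A u)
    refine ge_of_tendsto hten ?_
    exact eventually_nhdsWithin_of_forall fun t ht => ht.2
  have hune : u ≠ s := fun h => by rw [h] at hxu; linarith
  have hult : u < s := lt_of_le_of_ne hus hune
  have hneg : ∀ t, t ∈ Ioc u s → x t < 0 := by
    intro t ht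
    by_contra hge
    push_neg at hge
    have : t ∈ A := ⟨⟨hu0.trans ht.1.le, ht.2⟩, hge⟩
    exact absurd (le_csSup hAbdd this) (not_le.2 ht.1)
  -- y t = x t * exp (-K t) is monotone on [u, s]
  set y := fun t => x t * Real.exp (-K * t) with hy
  have hyd : ∀ t ∈ Icc u s, HasDerivAt y
      (x' t * Real.exp (-K * t) + x t * (-K * Real.exp (-K * t))) t := by
    intro t ht
    have htIcc : t ∈ Icc (0:ℝ) τ := ⟨hu0.trans ht.1, ht.2.trans hs.2⟩
    have he : HasDerivAt (fun t => Real.exp (-K * t)) (-K * Real.exp (-K * t)) t := by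
      have := (((hasDerivAt_id t).const_mul (-K)).exp)
      simpa [mul_comm] using this
    exact (hx t htIcc).mul he
  have hmono : MonotoneOn y (Icc u s) := by
    apply sicmr_monotoneOn hyd
    intro t ht
    have htIcc : t ∈ Icc (0:ℝ) τ := ⟨hu0.trans ht.1.le, ht.2.le.trans hs.2⟩
    have hxt : x t < 0 := hneg t ⟨ht.1, ht.2.le⟩
    have hKx : K * x t ≤ x' t := h t htIcc hxt.le
    have hep : 0 < Real.exp (-K * t) := Real.exp_pos _
    nlinarith [hep.le]
  have h1 : y u ≤ y s := hmono ⟨le_refl u, hus⟩ ⟨hus, le_refl s⟩ hus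
  have h2 : 0 ≤ y u := mul_nonneg hxu (Real.exp_pos _).le
  have h3 : y s < 0 := mul_neg_of_neg_of_pos hxs (Real.exp_pos _)
  linarith

/-- Exponential comparison bound: `x' ≤ a - b x` on `Ici T`. -/
lemma sicmr_exp_bound {x x' : ℝ → ℝ} {T a b : ℝ} (hb : 0 < b)
    (hx : ∀ t ∈ Ici T, HasDerivAt x (x' t) t)
    (h : ∀ t ∈ Ici T, x' t ≤ a - b * x t) :
    ∀ t ∈ Ici T, x t ≤ a / b + (x T - a / b) * Real.exp (-(b * (t - T))) := by
  set y := fun t => (x t - a / b) * Real.exp (b * (t - T)) with hy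
  have hyd : ∀ t ∈ Ici T, HasDerivAt y
      (x' t * Real.exp (b * (t - T)) + (x t - a / b) * (b * Real.exp (b * (t - T)))) t := by
    intro t ht
    have he : HasDerivAt (fun t => Real.exp (b * (t - T))) (b * Real.exp (b * (t - T))) t := by
      have := ((((hasDerivAt_id t).sub_const T).const_mul b).exp)
      simpa [mul_comm] using this
    exact ((hx t ht).sub_const (a / b)).mul he
  have hanti : AntitoneOn y (Ici T) := by
    apply sicmr_antitoneOn hyd
    intro t ht
    have hle := h t (Set.mem_Ici.2 (Set.mem_Ioi.1 ht).le)
    have hep : 0 < Real.exp (b * (t - T)) := Real.exp_pos _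
    have hba : b * (a / b) = a := by field_simp
    nlinarith [hep.le]
  intro t ht
  have h1 : y t ≤ y T := hanti (le_refl T) ht ht
  have h2 : y T = x T - a / b := by simp [hy]
  have hep : 0 < Real.exp (b * (t - T)) := Real.exp_pos _
  have h3 : Real.exp (-(b * (t - T))) = (Real.exp (b * (t - T)))⁻¹ := by
    rw [Real.exp_neg]
  rw [h3]
  rw [h2] at h1
  have h4 : x t - a / b ≤ (x T - a / b) * (Real.exp (b * (t - T)))⁻¹ := by
    rw [← div_eq_mul_inv, le_div_iff₀ hep]
    calc (x t - a / b) * Real.exp (b * (t - T)) = y t := rfl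
      _ ≤ x T - a / b := h1
  linarith

/-- Convergence to 0 from `x' ≤ u - b x`, `u → 0`, `x ≥ 0`. -/
lemma sicmr_tendsto_zero {x x' u : ℝ → ℝ} {b : ℝ} (hb : 0 < b)
    (hx : ∀ t ∈ Ici (0:ℝ), HasDerivAt x (x' t) t)
    (hnn : ∀ t ∈ Ici (0:ℝ), 0 ≤ x t)
    (h : ∀ t ∈ Ici (0:ℝ), x' t ≤ u t - b * x t)
    (hu : Tendsto u atTop (nhds 0)) : Tendsto x atTop (nhds 0) := by
  rw [Metric.tendsto_atTop]
  intro ε hε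
  have hbe : (0:ℝ) < b * ε / 2 := by positivity
  have hev : ∀ᶠ t in atTop, u t < b * ε / 2 := hu.eventually_lt_const hbe
  obtain ⟨T0, hT0⟩ := hev.exists_forall_of_atTop
  set T := max T0 0 with hT
  have hTnn : (0:ℝ) ≤ T := le_max_right _ _
  have hbd : ∀ t ∈ Ici T, x t ≤ (b * ε / 2) / b + (x T - (b * ε / 2) / b) *
      Real.exp (-(b * (t - T))) := by
    apply sicmr_exp_bound hb
    · exact fun t ht => hx t (hTnn.trans ht)
    · intro t ht
      have := hT0 t ((le_max_left _ _).trans ht)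
      have := h t (hTnn.trans ht)
      linarith
  have heq : (b * ε / 2) / b = ε / 2 := by field_simp
  -- RHS tends to ε/2 < ε
  have hrhs : Tendsto (fun t => (b * ε / 2) / b + (x T - (b * ε / 2) / b) *
      Real.exp (-(b * (t - T)))) atTop (nhds ((b * ε / 2) / b)) := by
    have h1 : Tendsto (fun t : ℝ => -(b * (t - T))) atTop atBot := by
      apply tendsto_neg_atBot_iff.2
      exact (tendsto_atTop_add_const_right _ (-T) tendsto_id).const_mul_atTop hb
    have h2 : Tendsto (fun t => Real.exp (-(b * (t - T)))) atTop (nhds 0) :=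
      Real.tendsto_exp_atBot.comp h1
    have := (h2.const_mul (x T - (b * ε / 2) / b)).const_add ((b * ε / 2) / b)
    simpa using this
  have hlt : ∀ᶠ t in atTop, (b * ε / 2) / b + (x T - (b * ε / 2) / b) *
      Real.exp (-(b * (t - T))) < ε := by
    apply hrhs.eventually_lt_const
    rw [heq]; linarith
  obtain ⟨T1, hT1⟩ := hlt.exists_forall_of_atTop
  refine ⟨max T T1, fun t ht => ?_⟩
  have htT : T ≤ t := (le_max_left _ _).trans ht
  have htT1 : T1 ≤ t := (le_max_right _ _).trans ht
  have h1 := hbd t htT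
  have h2 := hT1 t htT1
  have h3 := hnn t (hTnn.trans htT)
  rw [Real.dist_eq, abs_sub_comm, abs_of_nonpos (by linarith)]
  simp only [neg_sub, sub_zero] at *
  linarith [abs_of_nonneg h3]
open Filter Set
/-- `A + B * exp (-(b*(t-T))) → A`. -/
lemma sicmr_exp_tendsto (A B T : ℝ) {b : ℝ} (hb : 0 < b) :
    Tendsto (fun t => A + B * Real.exp (-(b * (t - T)))) atTop (nhds A) := by
  have h1 : Tendsto (fun t : ℝ => -(b * (t - T))) atTop atBot := by
    apply tendsto_neg_atBot_iff.2
    exact (tendsto_atTop_add_const_right _ (-T) tendsto_id).const_mul_atTop hb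
  have h2 : Tendsto (fun t => Real.exp (-(b * (t - T)))) atTop (nhds 0) :=
    Real.tendsto_exp_atBot.comp h1
  have := (h2.const_mul B).const_add A
  simpa using this

set_option maxHeartbeats 2000000 in
/-- If `ℛ₀ = cα/(μ(μ+γ)) ≤ 1`, the disease-free equilibrium
`E₀ = (α/μ, 0, 0, 0, 0)` is globally asymptotically stable in `Ω`: every
solution of the SICMR system on `[0, ∞)` whose initial value lies in `Ω`
converges to `E₀` as `t → ∞`. -/
theorem sicmr_disease_free_globally_stable
    (α c μ γ p ε a m d q : ℝ)
    (hα : 0 < α) (hc : 0 < c) (hμ : 0 < μ) (hγ : 0 < γ) (hp : 0 < p)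
    (hε : 0 < ε) (ha : 0 < a) (hm : 0 < m) (hd : 0 < d) (hq : 0 < q)
    (hR₀ : c * α / (μ * (μ + γ)) ≤ 1)
    (S I C M R : ℝ → ℝ)
    (hS : ∀ t, 0 ≤ t → HasDerivAt S (α - c * S t * I t - μ * S t) t)
    (hI : ∀ t, 0 ≤ t → HasDerivAt I
      (c * S t * I t - p * C t * I t / (ε + I t + a * M t) - γ * I t - μ * I t) t)
    (hC : ∀ t, 0 ≤ t → HasDerivAt C
      (p * C t * I t / (ε + I t + a * M t) - m * C t - d * C t - μ * C t) t)
    (hM : ∀ t, 0 ≤ t → HasDerivAt M (m * C t - q * M t - μ * M t) t)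
    (hR : ∀ t, 0 ≤ t → HasDerivAt R (q * M t + γ * I t - μ * R t) t)
    (h0 : 0 ≤ S 0 ∧ 0 ≤ I 0 ∧ 0 ≤ C 0 ∧ 0 ≤ M 0 ∧ 0 ≤ R 0 ∧
      S 0 + I 0 + C 0 + M 0 + R 0 ≤ α / μ) :
    Tendsto (fun t => (S t, I t, C t, M t, R t)) atTop
      (nhds (α / μ, (0 : ℝ), (0 : ℝ), (0 : ℝ), (0 : ℝ))) := by
  obtain ⟨hS0, hI0, hC0, hM0, hR0, hsum0⟩ := h0
  ---------------------------------------------------------------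
  -- Step 1 : nonnegativity of all components for all t ≥ 0
  ---------------------------------------------------------------
  have hP : ∀ t, 0 ≤ t → 0 ≤ S t ∧ 0 ≤ I t ∧ 0 ≤ C t ∧ 0 ≤ M t ∧ 0 ≤ R t := by
    by_contra hcon
    obtain ⟨t0, ht0⟩ := not_forall.1 hcon
    have ht0' : 0 ≤ t0 ∧ ¬(0 ≤ S t0 ∧ 0 ≤ I t0 ∧ 0 ≤ C t0 ∧ 0 ≤ M t0 ∧ 0 ≤ R t0) := by
      tauto
    set B := {t : ℝ | 0 ≤ t ∧ ¬(0 ≤ S t ∧ 0 ≤ I t ∧ 0 ≤ C t ∧ 0 ≤ M t ∧ 0 ≤ R t)} with hB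
    have hBne : B.Nonempty := ⟨t0, ht0'⟩
    have hBbdd : BddBelow B := ⟨0, fun t ht => ht.1⟩
    set t₁ := sInf B with ht₁def
    have ht₁0 : 0 ≤ t₁ := le_csInf hBne fun t ht => ht.1
    have hPlt : ∀ t, 0 ≤ t → t < t₁ →
        0 ≤ S t ∧ 0 ≤ I t ∧ 0 ≤ C t ∧ 0 ≤ M t ∧ 0 ≤ R t := by
      intro t h1 h2
      by_contra hnp
      exact absurd (csInf_le hBbdd ⟨h1, hnp⟩) (not_le.2 h2)
    -- nonnegativity holds at t₁ by continuity
    have hPt₁ : 0 ≤ S t₁ ∧ 0 ≤ I t₁ ∧ 0 ≤ C t₁ ∧ 0 ≤ M t₁ ∧ 0 ≤ R t₁ := by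
      rcases eq_or_lt_of_le ht₁0 with heq | hlt
      · rw [← heq]; exact ⟨hS0, hI0, hC0, hM0, hR0⟩
      · have key : ∀ (X : ℝ → ℝ), ContinuousAt X t₁ →
            (∀ t, 0 ≤ t → t < t₁ → 0 ≤ X t) → 0 ≤ X t₁ := by
          intro X hcX hXnn
          have hmem : t₁ ∈ closure (Ioo 0 t₁) := by
            rw [closure_Ioo (ne_of_lt hlt)]
            exact ⟨hlt.le, le_refl _⟩
          haveI hne : (nhdsWithin t₁ (Ioo 0 t₁)).NeBot :=
            mem_closure_iff_nhdsWithin_neBot.1 hmem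
          refine ge_of_tendsto
            (hcX.continuousWithinAt : ContinuousWithinAt X (Ioo 0 t₁) t₁) ?_
          exact eventually_nhdsWithin_of_forall fun t ht => hXnn t ht.1.le ht.2
        exact ⟨key S (hS t₁ ht₁0).continuousAt (fun t h1 h2 => (hPlt t h1 h2).1),
          key I (hI t₁ ht₁0).continuousAt (fun t h1 h2 => (hPlt t h1 h2).2.1),
          key C (hC t₁ ht₁0).continuousAt (fun t h1 h2 => (hPlt t h1 h2).2.2.1),
          key M (hM t₁ ht₁0).continuousAt (fun t h1 h2 => (hPlt t h1 h2).2.2.2.1),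
          key R (hR t₁ ht₁0).continuousAt (fun t h1 h2 => (hPlt t h1 h2).2.2.2.2)⟩
    have hPle : ∀ t, 0 ≤ t → t ≤ t₁ →
        0 ≤ S t ∧ 0 ≤ I t ∧ 0 ≤ C t ∧ 0 ≤ M t ∧ 0 ≤ R t := by
      intro t h1 h2
      rcases lt_or_eq_of_le h2 with h | h
      · exact hPlt t h1 h
      · rw [h]; exact hPt₁
    -- the denominator stays above ε/2 slightly beyond t₁
    have hDt₁ : ε ≤ ε + I t₁ + a * M t₁ := by
      have h1 := hPt₁.2.1
      have h2 := mul_nonneg ha.le hPt₁.2.2.2.1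
      linarith
    have hDc : ContinuousAt (fun t => ε + I t + a * M t) t₁ :=
      (continuousAt_const.add (hI t₁ ht₁0).continuousAt).add
        (continuousAt_const.mul (hM t₁ ht₁0).continuousAt)
    have hDev : ∀ᶠ t in nhds t₁, ε / 2 < ε + I t + a * M t :=
      hDc.eventually (eventually_gt_nhds (by linarith))
    obtain ⟨δ, hδpos, hδ⟩ := Metric.eventually_nhds_iff.1 hDev
    set τ := t₁ + δ / 2 with hτdef
    have ht₁τ : t₁ < τ := by simp only [hτdef]; linarith
    have hτ0 : 0 ≤ τ := ht₁0.trans ht₁τ.le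
    have hDpos : ∀ t ∈ Icc (0:ℝ) τ, ε / 2 < ε + I t + a * M t := by
      intro t ht
      rcases le_or_gt t t₁ with h' | h'
      · obtain ⟨_, hIt, _, hMt, _⟩ := hPle t ht.1 h'
        have := mul_nonneg ha.le hMt
        linarith
      · apply hδ
        rw [Real.dist_eq, abs_of_nonneg (by linarith)]
        have : t ≤ t₁ + δ / 2 := ht.2
        linarith
    have hDne : ∀ t ∈ Icc (0:ℝ) τ, ε + I t + a * M t ≠ 0 := fun t ht => by
      have := hDpos t ht; have h2 := half_pos hε
      exact (by linarith : (0:ℝ) < ε + I t + a * M t).ne'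
    -- I is nonnegative on [0, τ]
    have hInn : ∀ t ∈ Icc (0:ℝ) τ, 0 ≤ I t := by
      have hch : ContinuousOn
          (fun t => c * S t - p * C t / (ε + I t + a * M t) - γ - μ)
          (Icc (0:ℝ) τ) := by
        intro t ht
        have h1 : ContinuousAt
            (fun t => c * S t - p * C t / (ε + I t + a * M t) - γ - μ) t := by
          have hcS := (hS t ht.1).continuousAt
          have hcC := (hC t ht.1).continuousAt
          have hcIt := (hI t ht.1).continuousAt
          have hcM := (hM t ht.1).continuousAt
          exact (((continuousAt_const.mul hcS).sub
            ((continuousAt_const.mul hcC).div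
              ((continuousAt_const.add hcIt).add (continuousAt_const.mul hcM))
              (hDne t ht))).sub continuousAt_const).sub continuousAt_const
        exact h1.continuousWithinAt
      obtain ⟨K, hK⟩ := isCompact_Icc.bddAbove_image hch
      apply sicmr_nonneg (x' := fun t => c * S t * I t
        - p * C t * I t / (ε + I t + a * M t) - γ * I t - μ * I t) (K := K)
      · exact fun t ht => hI t ht.1
      · intro t ht hIt
        have hexpr : c * S t * I t - p * C t * I t / (ε + I t + a * M t)
            - γ * I t - μ * I t
            = (c * S t - p * C t / (ε + I t + a * M t) - γ - μ) * I t := by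
          ring
        rw [hexpr]
        have hhK : c * S t - p * C t / (ε + I t + a * M t) - γ - μ ≤ K :=
          hK (Set.mem_image_of_mem _ ht)
        exact mul_le_mul_of_nonpos_right hhK hIt
      · exact hI0
    -- C is nonnegative on [0, τ]
    have hCnn : ∀ t ∈ Icc (0:ℝ) τ, 0 ≤ C t := by
      have hch : ContinuousOn
          (fun t => p * I t / (ε + I t + a * M t) - m - d - μ)
          (Icc (0:ℝ) τ) := by
        intro t ht
        have h1 : ContinuousAt
            (fun t => p * I t / (ε + I t + a * M t) - m - d - μ) t := by
          have hcIt := (hI t ht.1).continuousAt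
          have hcM := (hM t ht.1).continuousAt
          exact ((((continuousAt_const.mul hcIt).div
            ((continuousAt_const.add hcIt).add (continuousAt_const.mul hcM))
            (hDne t ht)).sub continuousAt_const).sub continuousAt_const).sub
            continuousAt_const
        exact h1.continuousWithinAt
      obtain ⟨K, hK⟩ := isCompact_Icc.bddAbove_image hch
      apply sicmr_nonneg (x' := fun t => p * C t * I t / (ε + I t + a * M t)
        - m * C t - d * C t - μ * C t) (K := K)
      · exact fun t ht => hC t ht.1
      · intro t ht hCt
        have hexpr : p * C t * I t / (ε + I t + a * M t) - m * C t
            - d * C t - μ * C t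
            = (p * I t / (ε + I t + a * M t) - m - d - μ) * C t := by
          ring
        rw [hexpr]
        have hhK : p * I t / (ε + I t + a * M t) - m - d - μ ≤ K :=
          hK (Set.mem_image_of_mem _ ht)
        exact mul_le_mul_of_nonpos_right hhK hCt
      · exact hC0
    -- M is nonnegative on [0, τ]
    have hMnn : ∀ t ∈ Icc (0:ℝ) τ, 0 ≤ M t := by
      apply sicmr_nonneg (x' := fun t => m * C t - q * M t - μ * M t) (K := 0)
      · exact fun t ht => hM t ht.1
      · intro t ht hMt
        have h1 : 0 ≤ m * C t := mul_nonneg hm.le (hCnn t ht)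
        have h2 : q * M t ≤ 0 := mul_nonpos_of_nonneg_of_nonpos hq.le hMt
        have h3 : μ * M t ≤ 0 := mul_nonpos_of_nonneg_of_nonpos hμ.le hMt
        nlinarith
      · exact hM0
    -- S is nonnegative on [0, τ]
    have hSnn : ∀ t ∈ Icc (0:ℝ) τ, 0 ≤ S t := by
      apply sicmr_nonneg (x' := fun t => α - c * S t * I t - μ * S t) (K := 0)
      · exact fun t ht => hS t ht.1
      · intro t ht hSt
        have h1 : c * S t * I t ≤ 0 :=
          mul_nonpos_of_nonpos_of_nonneg
            (mul_nonpos_of_nonneg_of_nonpos hc.le hSt) (hInn t ht)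
        have h2 : μ * S t ≤ 0 := mul_nonpos_of_nonneg_of_nonpos hμ.le hSt
        nlinarith
      · exact hS0
    -- R is nonnegative on [0, τ]
    have hRnn : ∀ t ∈ Icc (0:ℝ) τ, 0 ≤ R t := by
      apply sicmr_nonneg (x' := fun t => q * M t + γ * I t - μ * R t) (K := 0)
      · exact fun t ht => hR t ht.1
      · intro t ht hRt
        have h1 : 0 ≤ q * M t := mul_nonneg hq.le (hMnn t ht)
        have h2 : 0 ≤ γ * I t := mul_nonneg hγ.le (hInn t ht)
        have h3 : μ * R t ≤ 0 := mul_nonpos_of_nonneg_of_nonpos hμ.le hRt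
        nlinarith
      · exact hR0
    -- contradiction with the definition of t₁
    obtain ⟨tb, htbB, htblt⟩ := exists_lt_of_csInf_lt hBne ht₁τ
    have htbIcc : tb ∈ Icc (0:ℝ) τ := ⟨htbB.1, htblt.le⟩
    exact htbB.2 ⟨hSnn tb htbIcc, hInn tb htbIcc, hCnn tb htbIcc,
      hMnn tb htbIcc, hRnn tb htbIcc⟩
  -- convenient projections
  have hSnn : ∀ t, 0 ≤ t → 0 ≤ S t := fun t ht => (hP t ht).1
  have hInn : ∀ t, 0 ≤ t → 0 ≤ I t := fun t ht => (hP t ht).2.1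
  have hCnn : ∀ t, 0 ≤ t → 0 ≤ C t := fun t ht => (hP t ht).2.2.1
  have hMnn : ∀ t, 0 ≤ t → 0 ≤ M t := fun t ht => (hP t ht).2.2.2.1
  have hRnn : ∀ t, 0 ≤ t → 0 ≤ R t := fun t ht => (hP t ht).2.2.2.2
  have hDge : ∀ t, 0 ≤ t → ε ≤ ε + I t + a * M t := fun t ht => by
    have h1 := hInn t ht
    have h2 := mul_nonneg ha.le (hMnn t ht)
    linarith
  have hDpos : ∀ t, 0 ≤ t → 0 < ε + I t + a * M t := fun t ht =>
    lt_of_lt_of_le hε (hDge t ht)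
  have hfrac : ∀ t, 0 ≤ t → 0 ≤ p * C t * I t / (ε + I t + a * M t) := fun t ht =>
    div_nonneg (mul_nonneg (mul_nonneg hp.le (hCnn t ht)) (hInn t ht))
      (hDpos t ht).le
  ---------------------------------------------------------------
  -- Step 2 : S ≤ α/μ for all t ≥ 0
  ---------------------------------------------------------------
  have hS0le : S 0 ≤ α / μ := by
    have := hsum0; linarith
  have hSle : ∀ t, 0 ≤ t → S t ≤ α / μ := by
    have hbd := sicmr_exp_bound (T := 0) (a := α) (b := μ) hμ
      (x := S) (x' := fun t => α - c * S t * I t - μ * S t)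
      (fun t ht => hS t ht)
      (fun t ht => by
        beta_reduce
        have h1 := mul_nonneg (mul_nonneg hc.le (hSnn t ht)) (hInn t ht)
        linarith)
    intro t ht
    have h1 := hbd t ht
    have h2 : (S 0 - α / μ) * Real.exp (-(μ * (t - 0))) ≤ 0 :=
      mul_nonpos_of_nonpos_of_nonneg (by linarith) (Real.exp_pos _).le
    linarith
  ---------------------------------------------------------------
  -- Step 3 : total population bound, hence C ≤ α/μ
  ---------------------------------------------------------------
  have hNle : ∀ t, 0 ≤ t → S t + I t + C t + M t + R t ≤ α / μ := by
    have hNd : ∀ t ∈ Ici (0:ℝ), HasDerivAt (fun t => S t + I t + C t + M t + R t)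
        ((α - c * S t * I t - μ * S t)
          + (c * S t * I t - p * C t * I t / (ε + I t + a * M t) - γ * I t - μ * I t)
          + (p * C t * I t / (ε + I t + a * M t) - m * C t - d * C t - μ * C t)
          + (m * C t - q * M t - μ * M t)
          + (q * M t + γ * I t - μ * R t)) t := fun t ht =>
      ((((hS t ht).add (hI t ht)).add (hC t ht)).add (hM t ht)).add (hR t ht)
    have hbd := sicmr_exp_bound (T := 0) (a := α) (b := μ) hμ hNd
      (fun t ht => by
        have h1 : 0 ≤ d * C t := mul_nonneg hd.le (hCnn t ht)
        have : (α - c * S t * I t - μ * S t)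
          + (c * S t * I t - p * C t * I t / (ε + I t + a * M t) - γ * I t - μ * I t)
          + (p * C t * I t / (ε + I t + a * M t) - m * C t - d * C t - μ * C t)
          + (m * C t - q * M t - μ * M t)
          + (q * M t + γ * I t - μ * R t)
          = α - μ * (S t + I t + C t + M t + R t) - d * C t := by ring
        rw [this]
        linarith)
    intro t ht
    have h1 := hbd t ht
    have h2 : (S 0 + I 0 + C 0 + M 0 + R 0 - α / μ) * Real.exp (-(μ * (t - 0))) ≤ 0 :=
      mul_nonpos_of_nonpos_of_nonneg (by linarith) (Real.exp_pos _).le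
    linarith
  have hCle : ∀ t, 0 ≤ t → C t ≤ α / μ := fun t ht => by
    have h1 := hNle t ht
    have := hSnn t ht; have := hInn t ht; have := hMnn t ht; have := hRnn t ht
    linarith
  ---------------------------------------------------------------
  -- Step 4 : cS ≤ μ + γ  (using R₀ ≤ 1)
  ---------------------------------------------------------------
  have hcα : c * α ≤ μ * (μ + γ) := by
    rw [div_le_one (by positivity)] at hR₀
    exact hR₀
  have hcαμ : c * (α / μ) ≤ μ + γ := by
    rw [mul_div_assoc', div_le_iff₀ hμ]
    nlinarith
  have hcS : ∀ t, 0 ≤ t → c * S t ≤ μ + γ := fun t ht =>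
    le_trans (mul_le_mul_of_nonneg_left (hSle t ht) hc.le) hcαμ
  ---------------------------------------------------------------
  -- Step 5 : I is antitone, converges to L ≥ 0
  ---------------------------------------------------------------
  have hIder : ∀ t, 0 ≤ t →
      c * S t * I t - p * C t * I t / (ε + I t + a * M t) - γ * I t - μ * I t
        ≤ (c * S t - (μ + γ)) * I t := fun t ht => by
    have h1 := hfrac t ht
    have : (c * S t - (μ + γ)) * I t
        = c * S t * I t - γ * I t - μ * I t := by ring
    linarith [this]
  have hIder0 : ∀ t, 0 ≤ t →
      c * S t * I t - p * C t * I t / (ε + I t + a * M t) - γ * I t - μ * I t ≤ 0 :=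
    fun t ht => le_trans (hIder t ht)
      (mul_nonpos_of_nonpos_of_nonneg (by linarith [hcS t ht]) (hInn t ht))
  have hIanti : AntitoneOn I (Ici 0) :=
    sicmr_antitoneOn (fun t ht => hI t ht) (fun t ht => hIder0 t (le_of_lt ht))
  set Itld := fun t => I (max t 0) with hItld
  have hItldanti : Antitone Itld := by
    intro s t hst
    exact hIanti (le_max_right s 0) (le_max_right t 0)
      (max_le_max hst (le_refl 0))
  have hItldbdd : BddBelow (Set.range Itld) := by
    refine ⟨0, fun y hy => ?_⟩
    obtain ⟨t, rfl⟩ := hy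
    exact hInn _ (le_max_right _ _)
  have hItldten : Tendsto Itld atTop (nhds (⨅ t, Itld t)) :=
    tendsto_atTop_ciInf hItldanti hItldbdd
  set L := ⨅ t, Itld t with hLdef
  have hIeq : I =ᶠ[atTop] Itld :=
    (eventually_ge_atTop 0).mono fun t ht => by
      simp only [hItld, max_eq_left ht]
  have hIten : Tendsto I atTop (nhds L) := hItldten.congr' hIeq.symm
  have hL0 : 0 ≤ L := le_ciInf fun t => hInn _ (le_max_right _ _)
  have hLle : ∀ t, 0 ≤ t → L ≤ I t := fun t ht => by
    have := ciInf_le hItldbdd t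
    simpa [hItld, max_eq_left ht] using this
  ---------------------------------------------------------------
  -- Step 6 : L = 0
  ---------------------------------------------------------------
  have hLeq : L = 0 := by
    rcases eq_or_lt_of_le hL0 with h | hLpos
    · exact h.symm
    exfalso
    have hb1 : 0 < μ + c * L := by positivity
    -- new upper bound on S
    have hSbd := sicmr_exp_bound (T := 0) (a := α) (b := μ + c * L) hb1
      (x := S) (x' := fun t => α - c * S t * I t - μ * S t)
      (fun t ht => hS t ht)
      (fun t ht => by
        beta_reduce
        have h1 : c * S t * L ≤ c * S t * I t :=
          mul_le_mul_of_nonneg_left (hLle t ht) (mul_nonneg hc.le (hSnn t ht))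
        nlinarith)
    have hgap : α / (μ + c * L) < α / μ :=
      div_lt_div_of_pos_left hα hμ (by nlinarith)
    set Sstar := α / (μ + c * L) with hSstar
    set gap := α / μ - Sstar with hgapdef
    have hgappos : 0 < gap := by simp only [hgapdef]; linarith
    have hrhs : Tendsto (fun t => Sstar + (S 0 - Sstar) *
        Real.exp (-((μ + c * L) * (t - 0)))) atTop (nhds Sstar) :=
      sicmr_exp_tendsto _ _ _ hb1
    have hev : ∀ᶠ t in atTop, S t ≤ Sstar + gap / 2 := by
      filter_upwards [hrhs.eventually_lt_const (by linarith : Sstar < Sstar + gap / 2),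
        eventually_ge_atTop (0:ℝ)] with t h1 h2
      have := hSbd t h2
      exact le_of_lt (lt_of_le_of_lt this h1)
    obtain ⟨T0, hT0⟩ := hev.exists_forall_of_atTop
    set T := max T0 0 with hTdef
    have hT0' : (0:ℝ) ≤ T := le_max_right _ _
    set η := c * gap / 2 * L with hηdef
    have hηpos : 0 < η := by positivity
    -- I decreases at constant rate η beyond T
    have hφ : AntitoneOn (fun t => I t + η * t) (Ici T) := by
      apply sicmr_antitoneOn (x' := fun t =>
        (c * S t * I t - p * C t * I t / (ε + I t + a * M t) - γ * I t - μ * I t) + η)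
      · intro t ht
        have h1 := (hI t (hT0'.trans ht)).add ((hasDerivAt_id t).const_mul η)
        rw [mul_one] at h1
        exact h1
      · intro t ht
        have ht0 : (0:ℝ) ≤ t := hT0'.trans (le_of_lt ht)
        have h1 := hIder t ht0
        have h2 : S t ≤ Sstar + gap / 2 := hT0 t ((le_max_left _ _).trans ht.le)
        have h3 : c * S t - (μ + γ) ≤ -(c * gap / 2) := by
          have h4 : c * S t ≤ c * (Sstar + gap / 2) :=
            mul_le_mul_of_nonneg_left h2 hc.le
          have h5 : Sstar + gap / 2 = α / μ - gap / 2 := by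
            simp only [hgapdef]; ring
          nlinarith [hcαμ]
        have h6 : (c * S t - (μ + γ)) * I t ≤ -(c * gap / 2) * I t :=
          mul_le_mul_of_nonneg_right h3 (hInn t ht0)
        have h7 : -(c * gap / 2) * I t ≤ -(c * gap / 2) * L := by
          have := hLle t ht0
          nlinarith [hgappos]
        have : -(c * gap / 2) * L = -η := by simp only [hηdef]; ring
        linarith
    -- contradiction : I becomes negative
    set tbig := T + (I T + 1) / η with htbig
    have htbigge : T ≤ tbig := by
      have : 0 ≤ (I T + 1) / η := div_nonneg (by linarith [hInn T hT0']) hηpos.le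
      simp only [htbig]; linarith
    have := hφ (le_refl T : T ∈ Ici T) (htbigge : tbig ∈ Ici T) htbigge
    have hval : η * tbig = η * T + (I T + 1) := by
      simp only [htbig]
      field_simp
    beta_reduce at this
    have : I tbig ≤ -1 := by linarith
    linarith [hInn tbig (hT0'.trans htbigge)]
  have hIten0 : Tendsto I atTop (nhds 0) := hLeq ▸ hIten
  ---------------------------------------------------------------
  -- Step 7 : C → 0, M → 0, R → 0, S → α/μ
  ---------------------------------------------------------------
  have hCten0 : Tendsto C atTop (nhds 0) := by
    apply sicmr_tendsto_zero (b := m + d + μ) (by positivity)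
      (fun t ht => hC t ht) (fun t ht => hCnn t ht)
      (u := fun t => p * (α / μ) * I t / ε)
    · intro t ht
      have h2 := hCle t ht
      have h3 := hInn t ht
      have h1 : p * C t * I t / (ε + I t + a * M t) ≤ p * (α / μ) * I t / ε := by
        apply div_le_div₀ (mul_nonneg (mul_nonneg hp.le (by positivity)) h3)
        · nlinarith [mul_nonneg (mul_nonneg hp.le (sub_nonneg.2 h2)) h3]
        · exact hε
        · exact hDge t ht
      have h2 : (m + d + μ) * C t = m * C t + d * C t + μ * C t := by ring
      linarith
    · have := (hIten0.const_mul (p * (α / μ))).div_const ε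
      simpa using this
  have hMten0 : Tendsto M atTop (nhds 0) := by
    apply sicmr_tendsto_zero (b := q + μ) (by positivity)
      (fun t ht => hM t ht) (fun t ht => hMnn t ht) (u := fun t => m * C t)
    · intro t ht
      have : (q + μ) * M t = q * M t + μ * M t := by ring
      linarith
    · simpa using hCten0.const_mul m
  have hRten0 : Tendsto R atTop (nhds 0) := by
    apply sicmr_tendsto_zero (b := μ) hμ
      (fun t ht => hR t ht) (fun t ht => hRnn t ht)
      (u := fun t => q * M t + γ * I t)
    · intro t ht
      linarith
    · have := (hMten0.const_mul q).add (hIten0.const_mul γ)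
      simpa using this
  have hwten0 : Tendsto (fun t => α / μ - S t) atTop (nhds 0) := by
    apply sicmr_tendsto_zero (b := μ) hμ
      (x' := fun t => -(α - c * S t * I t - μ * S t))
      (fun t ht => (hS t ht).const_sub (α / μ))
      (fun t ht => by linarith [hSle t ht])
      (u := fun t => c * (α / μ) * I t)
    · intro t ht
      have hkey : c * S t * I t ≤ c * (α / μ) * I t :=
        mul_le_mul_of_nonneg_right
          (mul_le_mul_of_nonneg_left (hSle t ht) hc.le) (hInn t ht)
      have hexp : μ * (α / μ - S t) = α - μ * S t := by
        field_simp
      linarith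
    · have := hIten0.const_mul (c * (α / μ))
      simpa using this
  have hSten : Tendsto S atTop (nhds (α / μ)) := by
    have h2 : Tendsto (fun t => α / μ - (α / μ - S t)) atTop (nhds (α / μ - 0)) :=
      tendsto_const_nhds.sub hwten0
    simpa using h2
  exact hSten.prodMk_nhds (hIten0.prodMk_nhds (hCten0.prodMk_nhds
    (hMten0.prodMk_nhds hRten0)))
end

section
/- Let α, c, μ, γ, m, d, q be positive reals and set ℛ₀ = cα/(μ(μ+γ)). The Jacobian of the SICMR system at the disease-free equilibrium E₀ = (α/μ, 0, 0, 0, 0) is the 5×5 matrix J(E₀) = [[−μ, −cα/μ, 0, 0, 0], [0, (μ+γ)(ℛ₀−1), 0, 0, 0], [0, 0, −(m+d+μ), 0, 0], [0, 0, m, −(q+μ), 0], [0, γ, 0, q, −μ]], whose eigenvalues are −μ (with multiplicity two), (μ+γ)(ℛ₀−1), −(m+d+μ), and −(q+μ). In particular, if ℛ₀ > 1 then J(E₀) has a positive real eigenvalue (μ+γ)(ℛ₀−1), so E₀ is linearly unstable. -/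
open Polynomial

set_option maxHeartbeats 2000000 in
/-- The Jacobian of the SICMR vector field at the
disease-free equilibrium `E₀ = (α/μ, 0, 0, 0, 0)` is the displayed matrix
`J(E₀)`, whose eigenvalues (with multiplicity, via the characteristic
polynomial) are `−μ` (twice), `(μ+γ)(ℛ₀−1)`, `−(m+d+μ)` and `−(q+μ)`.
In particular, if `ℛ₀ > 1` then `J(E₀)` has the positive real eigenvalue
`(μ+γ)(ℛ₀−1)`, so `E₀` is linearly unstable. -/
theorem sicmr_jacobian_at_disease_free
    (α c μ γ p ε a m d q : ℝ)
    (hα : 0 < α) (hc : 0 < c) (hμ : 0 < μ) (hγ : 0 < γ) (hp : 0 < p)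
    (hε : 0 < ε) (ha : 0 < a) (hm : 0 < m) (hd : 0 < d) (hq : 0 < q)
    (R₀ : ℝ) (hR₀ : R₀ = c * α / (μ * (μ + γ)))
    (J : Matrix (Fin 5) (Fin 5) ℝ)
    (hJ : J = !![-μ, -(c * α / μ), 0, 0, 0;
                 0, (μ + γ) * (R₀ - 1), 0, 0, 0;
                 0, 0, -(m + d + μ), 0, 0;
                 0, 0, m, -(q + μ), 0;
                 0, γ, 0, q, -μ]) :
    HasFDerivAt
      (fun x : Fin 5 → ℝ =>
        ![α - c * x 0 * x 1 - μ * x 0,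
          c * x 0 * x 1 - p * x 2 * x 1 / (ε + x 1 + a * x 3) - γ * x 1 - μ * x 1,
          p * x 2 * x 1 / (ε + x 1 + a * x 3) - m * x 2 - d * x 2 - μ * x 2,
          m * x 2 - q * x 3 - μ * x 3,
          q * x 3 + γ * x 1 - μ * x 4])
      (LinearMap.toContinuousLinearMap (Matrix.toLin' J))
      ![α / μ, 0, 0, 0, 0] ∧
    J.charpoly = (X + C μ) ^ 2 * (X - C ((μ + γ) * (R₀ - 1))) *
      (X + C (m + d + μ)) * (X + C (q + μ)) ∧
    (R₀ > 1 → (μ + γ) * (R₀ - 1) ∈ spectrum ℝ J ∧ 0 < (μ + γ) * (R₀ - 1)) := by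
  have hμ' : μ ≠ 0 := hμ.ne'
  refine ⟨?_, ?_, ?_⟩
  · -- derivative
    set pt : Fin 5 → ℝ := ![α / μ, 0, 0, 0, 0] with hpt
    have P : ∀ j : Fin 5, HasFDerivAt (fun x : Fin 5 → ℝ => x j)
        (ContinuousLinearMap.proj j : (Fin 5 → ℝ) →L[ℝ] ℝ) pt :=
      fun j => hasFDerivAt_apply j pt
    have hpt0 : pt 0 = α / μ := rfl
    have hpt1 : pt 1 = 0 := rfl
    have hpt2 : pt 2 = 0 := rfl
    have hpt3 : pt 3 = 0 := rfl
    have hpt4 : pt 4 = 0 := rfl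
    have hden : (fun x : Fin 5 → ℝ => ε + x 1 + a * x 3) pt ≠ 0 := by
      simp only [hpt1, hpt3, mul_zero, add_zero]; exact hε.ne'
    have hgg : HasFDerivAt (fun x : Fin 5 → ℝ => ε + x 1 + a * x 3) _ pt :=
      ((P 1).const_add ε).add ((P 3).const_mul a)
    have hinv := (hasFDerivAt_inv hden).comp pt hgg
    rw [hasFDerivAt_pi']
    intro i
    fin_cases i
    · show HasFDerivAt (fun x : Fin 5 → ℝ => α - c * x 0 * x 1 - μ * x 0)
        ((ContinuousLinearMap.proj 0).comp
          (LinearMap.toContinuousLinearMap (Matrix.toLin' J))) pt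
      have h := ((hasFDerivAt_const α pt).sub
        (((P 0).const_mul c).mul (P 1))).sub ((P 0).const_mul μ)
      refine h.congr_fderiv ?_
      refine ContinuousLinearMap.ext fun v => ?_
      simp [hJ, Matrix.toLin'_apply, Matrix.mulVec, dotProduct,
        Fin.sum_univ_five, hpt0, hpt1]
      ring
    · show HasFDerivAt (fun x : Fin 5 → ℝ =>
          c * x 0 * x 1 - p * x 2 * x 1 / (ε + x 1 + a * x 3) - γ * x 1 - μ * x 1)
        ((ContinuousLinearMap.proj 1).comp
          (LinearMap.toContinuousLinearMap (Matrix.toLin' J))) pt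
      have h := (((((P 0).const_mul c).mul (P 1)).sub
          ((((P 2).const_mul p).mul (P 1)).mul hinv)).sub
          ((P 1).const_mul γ)).sub ((P 1).const_mul μ)
      have heq : (fun x : Fin 5 → ℝ =>
          c * x 0 * x 1 - p * x 2 * x 1 / (ε + x 1 + a * x 3) - γ * x 1 - μ * x 1)
          = fun x : Fin 5 → ℝ =>
          c * x 0 * x 1 - p * x 2 * x 1 *
            ((fun y : ℝ => y⁻¹) ∘ fun x : Fin 5 → ℝ => ε + x 1 + a * x 3) x
            - γ * x 1 - μ * x 1 := by
        funext x; simp [Function.comp, div_eq_mul_inv]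
      rw [heq]
      refine h.congr_fderiv ?_
      refine ContinuousLinearMap.ext fun v => ?_
      simp [hJ, Matrix.toLin'_apply, Matrix.mulVec, dotProduct,
        Fin.sum_univ_five, hpt0, hpt1, hpt2, hpt3]
      have hμγ : μ * (μ + γ) ≠ 0 := by positivity
      simp only [hR₀]
      field_simp
      ring
    · show HasFDerivAt (fun x : Fin 5 → ℝ =>
          p * x 2 * x 1 / (ε + x 1 + a * x 3) - m * x 2 - d * x 2 - μ * x 2)
        ((ContinuousLinearMap.proj 2).comp
          (LinearMap.toContinuousLinearMap (Matrix.toLin' J))) pt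
      have h := ((((((P 2).const_mul p).mul (P 1)).mul hinv).sub
          ((P 2).const_mul m)).sub ((P 2).const_mul d)).sub ((P 2).const_mul μ)
      have heq : (fun x : Fin 5 → ℝ =>
          p * x 2 * x 1 / (ε + x 1 + a * x 3) - m * x 2 - d * x 2 - μ * x 2)
          = fun x : Fin 5 → ℝ =>
          p * x 2 * x 1 *
            ((fun y : ℝ => y⁻¹) ∘ fun x : Fin 5 → ℝ => ε + x 1 + a * x 3) x
            - m * x 2 - d * x 2 - μ * x 2 := by
        funext x; simp [Function.comp, div_eq_mul_inv]
      rw [heq]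
      refine h.congr_fderiv ?_
      refine ContinuousLinearMap.ext fun v => ?_
      simp [hJ, Matrix.toLin'_apply, Matrix.mulVec, dotProduct,
        Fin.sum_univ_five, hpt0, hpt1, hpt2, hpt3]
      ring
    · show HasFDerivAt (fun x : Fin 5 → ℝ => m * x 2 - q * x 3 - μ * x 3)
        ((ContinuousLinearMap.proj 3).comp
          (LinearMap.toContinuousLinearMap (Matrix.toLin' J))) pt
      have h := (((P 2).const_mul m).sub ((P 3).const_mul q)).sub ((P 3).const_mul μ)
      refine h.congr_fderiv ?_
      refine ContinuousLinearMap.ext fun v => ?_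
      simp [hJ, Matrix.toLin'_apply, Matrix.mulVec, dotProduct,
        Fin.sum_univ_five]
      ring
    · show HasFDerivAt (fun x : Fin 5 → ℝ => q * x 3 + γ * x 1 - μ * x 4)
        ((ContinuousLinearMap.proj 4).comp
          (LinearMap.toContinuousLinearMap (Matrix.toLin' J))) pt
      have h := (((P 3).const_mul q).add ((P 1).const_mul γ)).sub ((P 4).const_mul μ)
      refine h.congr_fderiv ?_
      refine ContinuousLinearMap.ext fun v => ?_
      simp [hJ, Matrix.toLin'_apply, Matrix.mulVec, dotProduct,
        Fin.sum_univ_five]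
      ring
  · -- charpoly
    have h1 : Matrix.charmatrix J =
        !![X + C μ, C (c * α / μ), 0, 0, 0;
           0, X - C ((μ + γ) * (R₀ - 1)), 0, 0, 0;
           0, 0, X + C (m + d + μ), 0, 0;
           0, 0, -C m, X + C (q + μ), 0;
           0, -C γ, 0, -C q, X + C μ] := by
      subst hJ
      refine Matrix.ext fun i j => ?_
      fin_cases i <;> fin_cases j <;>
        simp [Matrix.charmatrix_apply, Matrix.one_apply, Matrix.vecHead, Matrix.vecTail] <;> ring
    rw [Matrix.charpoly, h1]
    simp [Matrix.det_succ_row_zero, Fin.sum_univ_succ]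
    ring
  · intro hR
    have hpos : 0 < (μ + γ) * (R₀ - 1) := by
      have : 0 < μ + γ := by linarith
      nlinarith
    refine ⟨?_, hpos⟩
    rw [spectrum.mem_iff]
    rw [Matrix.isUnit_iff_isUnit_det]
    obtain ⟨lam, hlam⟩ : ∃ lam, lam = (μ + γ) * (R₀ - 1) := ⟨_, rfl⟩
    rw [← hlam]
    have hM : ((algebraMap ℝ (Matrix (Fin 5) (Fin 5) ℝ)) lam - J).det = 0 := by
      subst hJ
      have h2 : (algebraMap ℝ (Matrix (Fin 5) (Fin 5) ℝ)) lam -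
          !![-μ, -(c * α / μ), 0, 0, 0;
             0, (μ + γ) * (R₀ - 1), 0, 0, 0;
             0, 0, -(m + d + μ), 0, 0;
             0, 0, m, -(q + μ), 0;
             0, γ, 0, q, -μ] =
          !![lam + μ, (c * α / μ), 0, 0, 0;
             0, lam - (μ + γ) * (R₀ - 1), 0, 0, 0;
             0, 0, lam + (m + d + μ), 0, 0;
             0, 0, -m, lam + (q + μ), 0;
             0, -γ, 0, -q, lam + μ] := by
        refine Matrix.ext fun i j => ?_
        fin_cases i <;> fin_cases j <;>
          simp [Matrix.algebraMap_matrix_apply, Matrix.vecHead, Matrix.vecTail] <;> ring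
      rw [h2]
      rw [hlam]
      simp [Matrix.det_succ_row_zero, Fin.sum_univ_succ]
    rw [hM]
    simp
end

section
/- Let α, c, μ, γ, d, q be positive reals with ℛ₀ = cα/(μ(μ+γ)) ≤ 1. Then for every (S, I, C, M, R) ∈ Ω = {(S, I, C, M, R) ∈ ℝ₊^5 : S + I + C + M + R ≤ α/μ}, the derivative of the Lyapunov function 𝒱 = I + C + M along the SICMR flow satisfies cSI − (γ+μ)I − (d+μ)C − (q+μ)M ≤ (μ+γ)(ℛ₀ − 1)I − (d+μ)C − (q+μ)M ≤ 0. -/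
/-- If `ℛ₀ = cα/(μ(μ+γ)) ≤ 1`, then at every point of
`Ω = {(S,I,C,M,R) ∈ ℝ₊⁵ : S + I + C + M + R ≤ α/μ}` the derivative of the
Lyapunov function `𝒱 = I + C + M` along the SICMR flow satisfies
`𝒱' = cSI − (γ+μ)I − (d+μ)C − (q+μ)M ≤ (μ+γ)(ℛ₀−1)I − (d+μ)C − (q+μ)M ≤ 0`. -/
theorem sicmr_lyapunov_V_nonpositive
    (α c μ γ d q : ℝ)
    (hα : 0 < α) (hc : 0 < c) (hμ : 0 < μ) (hγ : 0 < γ) (hd : 0 < d) (hq : 0 < q)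
    (hR₀ : c * α / (μ * (μ + γ)) ≤ 1)
    (S I C M R : ℝ)
    (hSnn : 0 ≤ S) (hInn : 0 ≤ I) (hCnn : 0 ≤ C) (hMnn : 0 ≤ M) (hRnn : 0 ≤ R)
    (hsum : S + I + C + M + R ≤ α / μ) :
    c * S * I - (γ + μ) * I - (d + μ) * C - (q + μ) * M ≤
      (μ + γ) * (c * α / (μ * (μ + γ)) - 1) * I - (d + μ) * C - (q + μ) * M ∧
    (μ + γ) * (c * α / (μ * (μ + γ)) - 1) * I - (d + μ) * C - (q + μ) * M ≤ 0 := by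
  have hμγ : 0 < μ * (μ + γ) := mul_pos hμ (by linarith)
  have hS : S ≤ α / μ := by linarith
  have key : (μ + γ) * (c * α / (μ * (μ + γ))) = c * α / μ := by
    field_simp
  constructor
  · have h1 : c * S * I ≤ c * (α / μ) * I :=
      mul_le_mul_of_nonneg_right (mul_le_mul_of_nonneg_left hS hc.le) hInn
    have h2 : c * (α / μ) = (μ + γ) * (c * α / (μ * (μ + γ))) := by
      rw [key]; ring
    nlinarith [h1]
  · have hR1 : c * α / (μ * (μ + γ)) - 1 ≤ 0 := by linarith
    have : (μ + γ) * (c * α / (μ * (μ + γ)) - 1) * I ≤ 0 := by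
      apply mul_nonpos_of_nonpos_of_nonneg _ hInn
      exact mul_nonpos_of_nonneg_of_nonpos (by linarith) hR1
    nlinarith [mul_nonneg (by linarith : (0:ℝ) ≤ d + μ) hCnn,
      mul_nonneg (by linarith : (0:ℝ) ≤ q + μ) hMnn]
end

section
/- Let α, c, μ, γ, p, ε, a, m, d, q be positive reals with ℛ₀ = cα/(μ(μ+γ)) > 1, set b = a(m+d+μ)/(p−m−d−μ) when p ≠ m+d+μ, and let I₁ = (μ/c)(ℛ₀ − 1). Then pI₁/(ε + I₁) − (m + d + μ) is an eigenvalue of the Jacobian J(E₁) of the SICMR system at the boundary equilibrium E₁ = ((μ+γ)/c, I₁, 0, 0, (γ/c)(ℛ₀−1)), and it satisfies the identity pI₁/(ε + I₁) − (m + d + μ) = (μ(p−m−d−μ)/(c(ε + I₁)))·(ℛ₀ − 1 − εbc/(aμ)). Consequently: if p < m + d + μ and 1 < ℛ₀ < 1 + εbc/(aμ), this eigenvalue is positive and E₁ is linearly unstable; and if p > m + d + μ and ℛ₀ > 1 + εbc/(aμ), this eigenvalue is positive and E₁ is linearly unstable. -/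
set_option maxRecDepth 4000


/-- The quantity `λ₃ = pI₁/(ε+I₁) − (m+d+μ)` is an eigenvalue
of the Jacobian `J(E₁)` of the SICMR system at the boundary equilibrium `E₁`,
and satisfies `λ₃ = (μ(p−m−d−μ)/(c(ε+I₁)))·(ℛ₀ − 1 − εbc/(aμ))`. Consequently,
if `p < m+d+μ` and `1 < ℛ₀ < 1 + εbc/(aμ)`, or if `p > m+d+μ` and
`ℛ₀ > 1 + εbc/(aμ)`, then `λ₃ > 0` and `E₁` is linearly unstable. -/
theorem sicmr_boundary_jacobian_eigenvalue
    (α c μ γ p ε a m d q : ℝ)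
    (hα : 0 < α) (hc : 0 < c) (hμ : 0 < μ) (hγ : 0 < γ) (hp : 0 < p)
    (hε : 0 < ε) (ha : 0 < a) (hm : 0 < m) (hd : 0 < d) (hq : 0 < q)
    (hpne : p ≠ m + d + μ)
    (R₀ b I₁ lam₃ : ℝ)
    (hR₀ : R₀ = c * α / (μ * (μ + γ)))
    (hR₀gt : R₀ > 1)
    (hb : b = a * (m + d + μ) / (p - m - d - μ))
    (hI₁ : I₁ = μ / c * (R₀ - 1))
    (hlam₃ : lam₃ = p * I₁ / (ε + I₁) - (m + d + μ))
    (J : Matrix (Fin 5) (Fin 5) ℝ)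
    (hJ : J = !![-(c * I₁) - μ, -(μ + γ), 0, 0, 0;
                 c * I₁, 0, -(p * I₁ / (ε + I₁)), 0, 0;
                 0, 0, p * I₁ / (ε + I₁) - (m + d + μ), 0, 0;
                 0, 0, m, -(q + μ), 0;
                 0, γ, 0, q, -μ]) :
    lam₃ ∈ spectrum ℝ J ∧
    lam₃ = μ * (p - m - d - μ) / (c * (ε + I₁)) * (R₀ - 1 - ε * b * c / (a * μ)) ∧
    (p < m + d + μ → 1 < R₀ → R₀ < 1 + ε * b * c / (a * μ) → 0 < lam₃) ∧
    (p > m + d + μ → R₀ > 1 + ε * b * c / (a * μ) → 0 < lam₃) := by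
  have hI₁pos : 0 < I₁ := by
    rw [hI₁]
    have : 0 < R₀ - 1 := by linarith
    positivity
  have hεI : 0 < ε + I₁ := by linarith
  have hεIne : ε + I₁ ≠ 0 := ne_of_gt hεI
  have hpmdne : p - m - d - μ ≠ 0 := sub_ne_zero.mpr (by intro h; apply hpne; linarith)
  have hident : lam₃ = μ * (p - m - d - μ) / (c * (ε + I₁)) * (R₀ - 1 - ε * b * c / (a * μ)) := by
    have hI₁' : c * I₁ = μ * (R₀ - 1) := by
      rw [hI₁]; field_simp
    have hR : R₀ = c * I₁ / μ + 1 := by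
      field_simp
      linarith [hI₁']
    subst hb hlam₃ hR
    field_simp
    ring
  refine ⟨?_, hident, ?_, ?_⟩
  · rw [spectrum.mem_iff]
    intro hunit
    rw [Matrix.isUnit_iff_isUnit_det] at hunit
    have hdet : ((algebraMap ℝ (Matrix (Fin 5) (Fin 5) ℝ)) lam₃ - J).det = 0 := by
      apply Matrix.det_eq_zero_of_row_eq_zero (2 : Fin 5)
      intro j
      fin_cases j <;>
        simp [hJ, Matrix.algebraMap_eq_diagonal, Matrix.diagonal, hlam₃]
    rw [hdet] at hunit
    exact hunit.ne_zero rfl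
  · intro h1 h2 h3
    rw [hident]
    have : μ * (p - m - d - μ) / (c * (ε + I₁)) < 0 := by
      apply div_neg_of_neg_of_pos
      · nlinarith
      · positivity
    nlinarith [this, sub_neg.mpr (show R₀ < 1 + ε * b * c / (a * μ) from h3)]
  · intro h1 h2
    rw [hident]
    have hpos : 0 < μ * (p - m - d - μ) / (c * (ε + I₁)) := by
      apply div_pos; nlinarith; positivity
    nlinarith
end

section
/- Let α, c, μ, γ, p, ε, a, m, d, q be positive reals with ℛ₀ = cα/(μ(μ+γ)) > 1, p ≠ m + d + μ, b = a(m+d+μ)/(p−m−d−μ), and I₁ = (μ/c)(ℛ₀ − 1). Then for all C ≥ 0, M ≥ 0, and 0 ≤ I ≤ I₁, the derivative of the Lyapunov function 𝒱₁ = C along the SICMR flow satisfies pCI/(ε + I + aM) − (m + d + μ)C ≤ pCI₁/(ε + I₁) − (m + d + μ)C = (μ(p − m − d − μ)/(c(ε + I₁)))·(ℛ₀ − 1 − εbc/(aμ))·C; in particular this quantity is ≤ 0 whenever (p − m − d − μ)·(ℛ₀ − 1 − εbc/(aμ)) ≤ 0. -/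
/-- For `C, M ≥ 0` and `0 ≤ I ≤ I₁ = (μ/c)(ℛ₀−1)`, the
derivative of the Lyapunov function `𝒱₁ = C` along the SICMR flow satisfies
`pCI/(ε+I+aM) − (m+d+μ)C ≤ pCI₁/(ε+I₁) − (m+d+μ)C
  = (μ(p−m−d−μ)/(c(ε+I₁)))·(ℛ₀ − 1 − εbc/(aμ))·C`,
and this is `≤ 0` whenever `(p−m−d−μ)·(ℛ₀ − 1 − εbc/(aμ)) ≤ 0`. -/
theorem sicmr_lyapunov_V1
    (α c μ γ p ε a m d q : ℝ)
    (hα : 0 < α) (hc : 0 < c) (hμ : 0 < μ) (hγ : 0 < γ) (hp : 0 < p)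
    (hε : 0 < ε) (ha : 0 < a) (hm : 0 < m) (hd : 0 < d) (hq : 0 < q)
    (hpne : p ≠ m + d + μ)
    (R₀ b I₁ : ℝ)
    (hR₀ : R₀ = c * α / (μ * (μ + γ)))
    (hR₀gt : R₀ > 1)
    (hb : b = a * (m + d + μ) / (p - m - d - μ))
    (hI₁ : I₁ = μ / c * (R₀ - 1))
    (C M I : ℝ) (hC : 0 ≤ C) (hM : 0 ≤ M) (hI0 : 0 ≤ I) (hI1 : I ≤ I₁) :
    p * C * I / (ε + I + a * M) - (m + d + μ) * C ≤
      p * C * I₁ / (ε + I₁) - (m + d + μ) * C ∧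
    p * C * I₁ / (ε + I₁) - (m + d + μ) * C =
      μ * (p - m - d - μ) / (c * (ε + I₁)) * (R₀ - 1 - ε * b * c / (a * μ)) * C ∧
    ((p - m - d - μ) * (R₀ - 1 - ε * b * c / (a * μ)) ≤ 0 →
      p * C * I / (ε + I + a * M) - (m + d + μ) * C ≤ 0) := by
  have hk : p - m - d - μ ≠ 0 := by
    intro h; apply hpne; linarith
  have hεI : (0:ℝ) < ε + I := by linarith
  have hεI1 : (0:ℝ) < ε + I₁ := by linarith
  have hεIM : (0:ℝ) < ε + I + a * M := by nlinarith
  have hpC : 0 ≤ p * C := by positivity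
  have h1 : p * C * I / (ε + I + a * M) - (m + d + μ) * C ≤
      p * C * I₁ / (ε + I₁) - (m + d + μ) * C := by
    have step1 : p * C * I / (ε + I + a * M) ≤ p * C * I / (ε + I) := by
      apply div_le_div_of_nonneg_left _ hεI (by nlinarith)
      positivity
    have step2 : p * C * I / (ε + I) ≤ p * C * I₁ / (ε + I₁) := by
      rw [div_le_div_iff₀ hεI hεI1]
      nlinarith [mul_nonneg hpC (mul_nonneg hε.le (sub_nonneg.2 hI1))]
    linarith
  have h2 : p * C * I₁ / (ε + I₁) - (m + d + μ) * C =
      μ * (p - m - d - μ) / (c * (ε + I₁)) * (R₀ - 1 - ε * b * c / (a * μ)) * C := by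
    subst hb
    have hIc : I₁ * c = μ * (R₀ - 1) := by
      rw [hI₁]; field_simp
    field_simp
    linear_combination (C * (p - m - d - μ)) * hIc
  refine ⟨h1, h2, fun hneg => ?_⟩
  have h3 : μ * (p - m - d - μ) / (c * (ε + I₁)) * (R₀ - 1 - ε * b * c / (a * μ)) * C ≤ 0 := by
    have : μ * (p - m - d - μ) / (c * (ε + I₁)) * (R₀ - 1 - ε * b * c / (a * μ)) * C =
        μ / (c * (ε + I₁)) * ((p - m - d - μ) * (R₀ - 1 - ε * b * c / (a * μ))) * C := by
      ring
    rw [this]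
    apply mul_nonpos_of_nonpos_of_nonneg _ hC
    apply mul_nonpos_of_nonneg_of_nonpos _ hneg
    positivity
  linarith [h2 ▸ h1]
end

section
/- Let α, c, μ, γ, p, m, d, q be positive reals and set ℛ₀ = cα/(μ(μ+γ)). For the simplified SICMR system (with mass-action testing term pCI): (i) E₀ = (α/μ, 0, 0, 0, 0) is always an equilibrium; (ii) if ℛ₀ > 1, E₁ = ((μ+γ)/c, (μ/c)(ℛ₀−1), 0, 0, (γ/c)(ℛ₀−1)) is the unique equilibrium with I > 0 and C = M = 0; (iii) if ℛ₀ > 1 + c(m+d+μ)/(μp), there is a unique interior equilibrium E* = (S*, I*, C*, M*, R*) with I* = (m+d+μ)/p, S* = α/(cI* + μ), C* = (μ(μ+γ)/(p(cI* + μ)))·(ℛ₀ − 1 − c(m+d+μ)/(μp)), M* = mC*/(q+μ), R* = (qM* + γI*)/μ, all positive; and moreover I* < I₁ = (μ/c)(ℛ₀ − 1). -/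
/-- A point `(S, I, C, M, R)` is an equilibrium of the simplified SICMR system
(with mass-action testing term `pCI`) iff all five right-hand sides vanish. -/
def simplifiedSicmrEquilibrium (α c μ γ p m d q S I C M R : ℝ) : Prop :=
  α - c * S * I - μ * S = 0 ∧
  c * S * I - p * C * I - γ * I - μ * I = 0 ∧
  p * C * I - (m + d + μ) * C = 0 ∧
  m * C - (q + μ) * M = 0 ∧
  q * M + γ * I - μ * R = 0

set_option maxHeartbeats 2000000 in
/-- Equilibria of the simplified SICMR system: (i) `E₀` is
always an equilibrium; (ii) for `ℛ₀ > 1`, `E₁` is the unique equilibrium with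
`I > 0` and `C = M = 0`; (iii) for `ℛ₀ > 1 + c(m+d+μ)/(μp)` there is a unique
interior equilibrium `E*`, given by the displayed formulas, with `I* < I₁`. -/
theorem simplified_sicmr_equilibria
    (α c μ γ p m d q : ℝ)
    (hα : 0 < α) (hc : 0 < c) (hμ : 0 < μ) (hγ : 0 < γ) (hp : 0 < p)
    (hm : 0 < m) (hd : 0 < d) (hq : 0 < q)
    (R₀ : ℝ) (hR₀ : R₀ = c * α / (μ * (μ + γ))) :
    simplifiedSicmrEquilibrium α c μ γ p m d q (α / μ) 0 0 0 0 ∧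
    (R₀ > 1 →
      simplifiedSicmrEquilibrium α c μ γ p m d q
        ((μ + γ) / c) (μ / c * (R₀ - 1)) 0 0 (γ / c * (R₀ - 1)) ∧
      ∀ S I C M R : ℝ, I > 0 → C = 0 → M = 0 →
        simplifiedSicmrEquilibrium α c μ γ p m d q S I C M R →
        (S, I, C, M, R) =
          ((μ + γ) / c, μ / c * (R₀ - 1), 0, 0, γ / c * (R₀ - 1))) ∧
    (R₀ > 1 + c * (m + d + μ) / (μ * p) →
      ∃ Sstar Istar Cstar Mstar Rstar : ℝ,
        Istar = (m + d + μ) / p ∧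
        Sstar = α / (c * Istar + μ) ∧
        Cstar = μ * (μ + γ) / (p * (c * Istar + μ)) *
          (R₀ - 1 - c * (m + d + μ) / (μ * p)) ∧
        Mstar = m * Cstar / (q + μ) ∧
        Rstar = (q * Mstar + γ * Istar) / μ ∧
        0 < Sstar ∧ 0 < Istar ∧ 0 < Cstar ∧ 0 < Mstar ∧ 0 < Rstar ∧
        simplifiedSicmrEquilibrium α c μ γ p m d q Sstar Istar Cstar Mstar Rstar ∧
        (∀ S I C M R : ℝ, 0 < S → 0 < I → 0 < C → 0 < M → 0 < R →
          simplifiedSicmrEquilibrium α c μ γ p m d q S I C M R →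
          (S, I, C, M, R) = (Sstar, Istar, Cstar, Mstar, Rstar)) ∧
        Istar < μ / c * (R₀ - 1)) := by

  have hμγ : (0:ℝ) < μ + γ := by linarith
  have hμ0 : μ ≠ 0 := ne_of_gt hμ
  have hc0 : c ≠ 0 := ne_of_gt hc
  have hp0 : p ≠ 0 := ne_of_gt hp
  have hμγ0 : μ + γ ≠ 0 := ne_of_gt hμγ
  have hmdμ : (0:ℝ) < m + d + μ := by linarith
  have hqμ : (0:ℝ) < q + μ := by linarith
  refine ⟨⟨by field_simp; ring, by ring, by ring, by ring, by ring⟩, ?_, ?_⟩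
  · intro hR1
    constructor
    · refine ⟨?_, ?_, by ring, by ring, ?_⟩
      · rw [hR₀]; field_simp; ring
      · field_simp; ring
      · rw [hR₀]; field_simp; ring
    · rintro S I C M R hI hC hM ⟨e1, e2, e3, e4, e5⟩
      subst hC hM
      have hS : S = (μ + γ) / c := by
        have h2 : I * (c * S - γ - μ) = 0 := by linear_combination e2
        have := mul_eq_zero.mp h2
        rcases this with h | h
        · exact absurd h (ne_of_gt hI)
        · field_simp; linarith
      have hI' : I = μ / c * (R₀ - 1) := by
        rw [hS] at e1
        rw [hR₀]
        field_simp at e1 ⊢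
        nlinarith [e1]
      have hR : R = γ / c * (R₀ - 1) := by
        have : μ * R = γ * I := by linarith
        rw [hI'] at this
        field_simp at this ⊢
        nlinarith [this]
      simp [hS, hI', hR]
  · intro hR2
    obtain ⟨Istar, hIs⟩ : ∃ x : ℝ, x = (m + d + μ) / p := ⟨_, rfl⟩
    obtain ⟨Sstar, hSs⟩ : ∃ x : ℝ, x = α / (c * Istar + μ) := ⟨_, rfl⟩
    obtain ⟨Cstar, hCs⟩ : ∃ x : ℝ, x = μ * (μ + γ) / (p * (c * Istar + μ)) *
          (R₀ - 1 - c * (m + d + μ) / (μ * p)) := ⟨_, rfl⟩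
    obtain ⟨Mstar, hMs⟩ : ∃ x : ℝ, x = m * Cstar / (q + μ) := ⟨_, rfl⟩
    obtain ⟨Rstar, hRs⟩ : ∃ x : ℝ, x = (q * Mstar + γ * Istar) / μ := ⟨_, rfl⟩
    have hIpos : 0 < Istar := hIs ▸ div_pos hmdμ hp
    have hden : 0 < c * Istar + μ := by positivity
    have hSpos : 0 < Sstar := hSs ▸ div_pos hα hden
    have hCpos : 0 < Cstar := by
      rw [hCs]
      apply mul_pos
      · positivity
      · linarith
    have hMpos : 0 < Mstar := by
      rw [hMs]
      apply div_pos (mul_pos hm hCpos) hqμ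
    have hRpos : 0 < Rstar := by
      rw [hRs]
      apply div_pos _ hμ
      positivity
    have hpI : p * Istar = m + d + μ := by
      rw [hIs]; field_simp
    have hcS : c * Sstar = p * Cstar + γ + μ := by
      rw [hSs, hCs, hR₀, hIs]
      have hd0 : c * ((m+d+μ)/p) + μ ≠ 0 := by positivity
      field_simp
      ring
    refine ⟨Sstar, Istar, Cstar, Mstar, Rstar, hIs, hSs, hCs, hMs, hRs,
      hSpos, hIpos, hCpos, hMpos, hRpos, ⟨?_, ?_, ?_, ?_, ?_⟩, ?_, ?_⟩
    · rw [hSs]; field_simp; ring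
    · linear_combination Istar * hcS
    · linear_combination Cstar * hpI
    · rw [hMs]; field_simp; ring
    · rw [hRs]; field_simp; ring
    · rintro S I C M R hS hI hC hM hR ⟨e1, e2, e3, e4, e5⟩
      have hIeq : I = Istar := by
        have h3 : C * (p * I - (m + d + μ)) = 0 := by linear_combination e3
        rcases mul_eq_zero.mp h3 with h | h
        · exact absurd h (ne_of_gt hC)
        · rw [hIs, eq_div_iff hp0]; linarith
      have hSeq : S = Sstar := by
        rw [hSs]
        have h1 : S * (c * Istar + μ) = α := by
          rw [← hIeq]; linear_combination -e1
        rw [eq_div_iff (ne_of_gt hden)]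
        linarith
      have hCeq : C = Cstar := by
        have h2 : (c * Sstar - p * C - γ - μ) * Istar = 0 := by
          rw [← hSeq, ← hIeq]; linear_combination e2
        rcases mul_eq_zero.mp h2 with h | h
        · have : p * C = p * Cstar := by linarith [hcS]
          exact mul_left_cancel₀ hp0 this
        · exact absurd h (ne_of_gt hIpos)
      have hMeq : M = Mstar := by
        rw [hMs, ← hCeq, eq_div_iff (ne_of_gt hqμ)]; linarith
      have hReq : R = Rstar := by
        rw [hRs, ← hMeq, ← hIeq, eq_div_iff hμ0]; linarith
      simp [hIeq, hSeq, hCeq, hMeq, hReq]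
    · rw [hIs, show μ / c * (R₀ - 1) = μ * (R₀ - 1) / c by ring,
        div_lt_div_iff₀ hp hc]
      have h : c * (m + d + μ) / (μ * p) < R₀ - 1 := by linarith
      have key : c * (m + d + μ) < (R₀ - 1) * (μ * p) :=
        (div_lt_iff₀ (by positivity)).mp h
      nlinarith [key]
end

section
/- Let α, c, μ, γ, p, m, d, q be positive reals with ℛ₀ = cα/(μ(μ+γ)) satisfying 1 < ℛ₀ ≤ 1 + c(m+d+μ)/(μp). Then for the simplified SICMR system the boundary equilibrium E₁ = ((μ+γ)/c, (μ/c)(ℛ₀−1), 0, 0, (γ/c)(ℛ₀−1)) is globally asymptotically stable in Ω off the S-axis: every solution with initial value in Ω = {(S, I, C, M, R) ∈ ℝ₊^5 : S + I + C + M + R ≤ α/μ} and I(0) > 0 converges to E₁ as t → ∞. Moreover, if ℛ₀ > 1 + c(m+d+μ)/(μp), then E₁ is linearly unstable (the Jacobian at E₁ has the positive eigenvalue pI₁ − (m+d+μ) where I₁ = (μ/c)(ℛ₀−1)). -/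
open Filter Set

/-- antiderivative of a function continuous on `[a,∞)`. -/
lemma exists_antideriv {f : ℝ → ℝ} {a : ℝ} (hf : ∀ t, a ≤ t → ContinuousAt f t) :
    ∃ F : ℝ → ℝ, F a = 0 ∧ ∀ t, a ≤ t → HasDerivAt F (f t) t := by
  set g : ℝ → ℝ := fun s => f (max s a) with hg
  have hgc : Continuous g := by
    rw [continuous_iff_continuousAt]
    intro s
    have hmax : ContinuousAt (fun s : ℝ => max s a) s :=
      Continuous.continuousAt (by continuity)
    exact ContinuousAt.comp (hf _ (le_max_right s a)) hmax
  refine ⟨fun u => ∫ s in a..u, g s, by simp, fun t ht => ?_⟩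
  have h1 : HasDerivAt (fun u => ∫ s in a..u, g s) (g t) t :=
    intervalIntegral.integral_hasDerivAt_right (hgc.intervalIntegrable _ _)
      (hgc.aestronglyMeasurable.stronglyMeasurableAtFilter) hgc.continuousAt
  simpa [hg, max_eq_left ht] using h1

lemma monoOn_Ici {F f : ℝ → ℝ} {a : ℝ} (hF : ∀ t, a ≤ t → HasDerivAt F (f t) t)
    (hf : ∀ t, a ≤ t → 0 ≤ f t) : MonotoneOn F (Ici a) := by
  apply monotoneOn_of_deriv_nonneg (convex_Ici a)
  · exact fun t ht => (hF t ht).continuousAt.continuousWithinAt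
  · rw [interior_Ici]
    exact fun t ht => (hF t ht.le).differentiableAt.differentiableWithinAt
  · rw [interior_Ici]
    intro t ht
    rw [(hF t ht.le).deriv]
    exact hf t ht.le

lemma antiOn_Ici {F f : ℝ → ℝ} {a : ℝ} (hF : ∀ t, a ≤ t → HasDerivAt F (f t) t)
    (hf : ∀ t, a ≤ t → f t ≤ 0) : AntitoneOn F (Ici a) := by
  apply antitoneOn_of_deriv_nonpos (convex_Ici a)
  · exact fun t ht => (hF t ht).continuousAt.continuousWithinAt
  · rw [interior_Ici]
    exact fun t ht => (hF t ht.le).differentiableAt.differentiableWithinAt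
  · rw [interior_Ici]
    intro t ht
    rw [(hF t ht.le).deriv]
    exact hf t ht.le

lemma strictMonoOn_Ici {F f : ℝ → ℝ} {a : ℝ} (hF : ∀ t, a ≤ t → HasDerivAt F (f t) t)
    (hf : ∀ t, a ≤ t → 0 < f t) : StrictMonoOn F (Ici a) := by
  apply strictMonoOn_of_deriv_pos (convex_Ici a)
  · exact fun t ht => (hF t ht).continuousAt.continuousWithinAt
  · rw [interior_Ici]
    intro t ht
    rw [(hF t ht.le).deriv]
    exact hf t ht.le

lemma constOn_Ici {F f : ℝ → ℝ} {a : ℝ} (hF : ∀ t, a ≤ t → HasDerivAt F (f t) t)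
    (hf : ∀ t, a ≤ t → f t = 0) : ∀ t, a ≤ t → F t = F a := by
  intro t ht
  have h1 := monoOn_Ici hF (fun t ht => (hf t ht).ge) self_mem_Ici ht ht
  have h2 := antiOn_Ici hF (fun t ht => (hf t ht).le) self_mem_Ici ht ht
  exact le_antisymm h2 h1

lemma monoOn_Icc {F f : ℝ → ℝ} {a b : ℝ} (hF : ∀ t, a ≤ t → t ≤ b → HasDerivAt F (f t) t)
    (hf : ∀ t, a ≤ t → t ≤ b → 0 ≤ f t) : MonotoneOn F (Icc a b) := by
  apply monotoneOn_of_deriv_nonneg (convex_Icc a b)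
  · exact fun t ht => (hF t ht.1 ht.2).continuousAt.continuousWithinAt
  · rw [interior_Icc]
    exact fun t ht => (hF t ht.1.le ht.2.le).differentiableAt.differentiableWithinAt
  · rw [interior_Icc]
    intro t ht
    rw [(hF t ht.1.le ht.2.le).deriv]
    exact hf t ht.1.le ht.2.le

/-- bounded derivative on `[a,∞)` gives a Lipschitz bound. -/
lemma lipOn {f g : ℝ → ℝ} {a K : ℝ} (hf : ∀ t, a ≤ t → HasDerivAt f (g t) t)
    (hg : ∀ t, a ≤ t → |g t| ≤ K) :
    ∀ u, a ≤ u → ∀ v, a ≤ v → |f u - f v| ≤ K * |u - v| := by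
  intro u hu v hv
  have := Convex.norm_image_sub_le_of_norm_hasDerivWithin_le
    (f := f) (f' := g) (C := K) (s := Ici a)
    (fun t ht => (hf t ht).hasDerivWithinAt)
    (fun t ht => by simpa using hg t ht) (convex_Ici a) hv hu
  simpa [Real.norm_eq_abs] using this
lemma tendsto_of_monoOn_bddAbove {F : ℝ → ℝ} {a B : ℝ} (hF : MonotoneOn F (Ici a))
    (hB : ∀ t, a ≤ t → F t ≤ B) : ∃ L, Tendsto F atTop (nhds L) := by
  set G : ℝ → ℝ := fun t => F (max t a) with hG
  have hmono : Monotone G := fun u v huv =>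
    hF (Set.mem_Ici.2 (le_max_right _ _)) (Set.mem_Ici.2 (le_max_right _ _)) (max_le_max huv le_rfl)
  have hbdd : BddAbove (range G) := ⟨B, by rintro x ⟨t, rfl⟩; exact hB _ (le_max_right t a)⟩
  refine ⟨⨆ t, G t, (tendsto_atTop_ciSup hmono hbdd).congr' ?_⟩
  filter_upwards [eventually_ge_atTop a] with t ht
  simp [hG, max_eq_left ht]

lemma tendsto_of_antiOn_bddBelow {F : ℝ → ℝ} {a B : ℝ} (hF : AntitoneOn F (Ici a))
    (hB : ∀ t, a ≤ t → B ≤ F t) : ∃ L, Tendsto F atTop (nhds L) := by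
  set G : ℝ → ℝ := fun t => F (max t a) with hG
  have hmono : Antitone G := fun u v huv =>
    hF (Set.mem_Ici.2 (le_max_right _ _)) (Set.mem_Ici.2 (le_max_right _ _)) (max_le_max huv le_rfl)
  have hbdd : BddBelow (range G) := ⟨B, by rintro x ⟨t, rfl⟩; exact hB _ (le_max_right t a)⟩
  refine ⟨⨅ t, G t, (tendsto_atTop_ciInf hmono hbdd).congr' ?_⟩
  filter_upwards [eventually_ge_atTop a] with t ht
  simp [hG, max_eq_left ht]

/-- Barbalat-type lemma: if `F` converges and its derivative `f` is Lipschitz, `f → 0`. -/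
lemma barbalat {F f : ℝ → ℝ} {a K : ℝ} (hK : 0 < K)
    (hF : ∀ t, a ≤ t → HasDerivAt F (f t) t)
    (hLip : ∀ u, a ≤ u → ∀ v, a ≤ v → |f u - f v| ≤ K * |u - v|)
    {L : ℝ} (hconv : Tendsto F atTop (nhds L)) :
    Tendsto f atTop (nhds 0) := by
  rw [Metric.tendsto_atTop]
  intro ε hε
  obtain ⟨T, hT⟩ := (Metric.tendsto_atTop.1 hconv) (ε^2/(16*K)) (by positivity)
  refine ⟨max a T, fun t ht => ?_⟩
  have hta : a ≤ t := le_trans (le_max_left _ _) ht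
  have htT : T ≤ t := le_trans (le_max_right _ _) ht
  rw [Real.dist_eq, sub_zero]
  by_contra hcon
  push_neg at hcon
  set δ := ε/(2*K) with hδ
  have hδpos : 0 < δ := by positivity
  have hKδ : K * δ = ε/2 := by rw [hδ]; field_simp
  have hεδ : ε/2 * δ = ε^2/(4*K) := by rw [hδ]; field_simp; norm_num
  have hFd : |F (t+δ) - F t| < ε^2/(8*K) := by
    have h1 := hT t htT
    have h2 := hT (t+δ) (by linarith)
    rw [Real.dist_eq] at h1 h2
    calc |F (t+δ) - F t| ≤ |F (t+δ) - L| + |L - F t| := abs_sub_le _ _ _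
      _ = |F (t+δ) - L| + |F t - L| := by rw [abs_sub_comm L]
      _ < ε^2/(16*K) + ε^2/(16*K) := by linarith
      _ = ε^2/(8*K) := by ring
  have hFd' := abs_lt.1 hFd
  have hε2 : 0 < ε^2/(8*K) := by positivity
  have hlin : ∀ u : ℝ, HasDerivAt (fun u : ℝ => ε/2*u) (ε/2) u :=
    fun u => by simpa using (hasDerivAt_id u).const_mul (ε/2)
  have hhalf : ε^2/(4*K) = 2*(ε^2/(8*K)) := by ring
  rcases le_abs.1 hcon with hpos | hneg
  · -- f t ≥ ε
    have hlow : ∀ u, t ≤ u → u ≤ t + δ → ε/2 ≤ f u := by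
      intro u h1 h2
      have hl := hLip u (le_trans hta h1) t hta
      have : |u - t| ≤ δ := by rw [abs_of_nonneg (by linarith)]; linarith
      have h3 : |f u - f t| ≤ ε/2 := le_trans hl (by nlinarith)
      have := (abs_le.1 h3).1
      linarith
    have hmono := monoOn_Icc (F := fun u => F u - ε/2 * u) (f := fun u => f u - ε/2)
      (a := t) (b := t + δ)
      (fun u h1 h2 => ((hF u (le_trans hta h1)).sub (hlin u)))
      (fun u h1 h2 => by have := hlow u h1 h2; linarith)
    have := hmono (left_mem_Icc.2 (by linarith)) (right_mem_Icc.2 (by linarith)) (by linarith)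
    simp only at this
    nlinarith [hFd'.2, hεδ, hhalf]
  · -- f t ≤ -ε
    have hlow : ∀ u, t ≤ u → u ≤ t + δ → f u ≤ -(ε/2) := by
      intro u h1 h2
      have hl := hLip u (le_trans hta h1) t hta
      have : |u - t| ≤ δ := by rw [abs_of_nonneg (by linarith)]; linarith
      have h3 : |f u - f t| ≤ ε/2 := le_trans hl (by nlinarith)
      have := (abs_le.1 h3).2
      linarith
    have hmono := monoOn_Icc (F := fun u => -(F u) - ε/2 * u) (f := fun u => -(f u) - ε/2)
      (a := t) (b := t + δ)
      (fun u h1 h2 => ((hF u (le_trans hta h1)).neg.sub (hlin u)))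
      (fun u h1 h2 => by have := hlow u h1 h2; linarith)
    have := hmono (left_mem_Icc.2 (by linarith)) (right_mem_Icc.2 (by linarith)) (by linarith)
    simp only at this
    nlinarith [hFd'.1, hεδ, hhalf]

/-- `x' = g - b x` with `g → 0`, `b > 0` implies `x → 0`. -/
lemma lin_tendsto {x g : ℝ → ℝ} {a b : ℝ} (hb : 0 < b)
    (hx : ∀ t, a ≤ t → HasDerivAt x (g t - b * x t) t)
    (hg : Tendsto g atTop (nhds 0)) : Tendsto x atTop (nhds 0) := by
  have hE : ∀ u : ℝ, HasDerivAt (fun u => Real.exp (b*u)) (Real.exp (b*u) * b) u :=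
    fun u => by simpa using ((hasDerivAt_id u).const_mul b).exp
  have hEinv : ∀ u : ℝ, Real.exp (b*u) * Real.exp (-(b*u)) = 1 := by
    intro u; rw [← Real.exp_add]; simp
  rw [Metric.tendsto_atTop]
  intro ε hε
  obtain ⟨T₀, hT₀⟩ := (Metric.tendsto_atTop.1 hg) (b*ε/4) (by positivity)
  have hbε : 0 < b*ε := mul_pos hb hε
  set T := max a T₀ with hTdef
  have hTa : a ≤ T := le_max_left _ _
  -- upper bound
  have hup : ∀ t, T ≤ t →
      x t - ε/2 ≤ (Real.exp (b*T) * (x T - ε/2)) * Real.exp (-(b*t)) := by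
    intro t ht
    have hanti : AntitoneOn (fun u => Real.exp (b*u) * (x u - ε/2)) (Ici T) := by
      apply antiOn_Ici (f := fun u => Real.exp (b*u) * (g u - b*ε/2))
      · intro u hu
        have h1 := (hE u).mul ((hx u (le_trans hTa hu)).sub_const (ε/2))
        refine h1.congr_deriv ?_; ring
      · intro u hu
        have := hT₀ u (le_trans (le_max_right _ _) hu)
        rw [Real.dist_eq, sub_zero] at this
        have h6 := (abs_lt.1 this).2
        have hepos := Real.exp_pos (b*u)
        nlinarith [mul_pos hepos (show 0 < b*ε/2 - g u by linarith)]
    have h1 := hanti self_mem_Ici ht ht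
    have h2 : x t - ε/2 = (Real.exp (b*t) * (x t - ε/2)) * Real.exp (-(b*t)) := by
      calc x t - ε/2 = (x t - ε/2) * (Real.exp (b*t) * Real.exp (-(b*t))) := by
            rw [hEinv, mul_one]
        _ = (Real.exp (b*t) * (x t - ε/2)) * Real.exp (-(b*t)) := by ring
    rw [h2]
    exact mul_le_mul_of_nonneg_right h1 (Real.exp_nonneg _)
  -- lower bound
  have hlo : ∀ t, T ≤ t →
      (Real.exp (b*T) * (x T + ε/2)) * Real.exp (-(b*t)) ≤ x t + ε/2 := by
    intro t ht
    have hmono : MonotoneOn (fun u => Real.exp (b*u) * (x u + ε/2)) (Ici T) := by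
      apply monoOn_Ici (f := fun u => Real.exp (b*u) * (g u + b*ε/2))
      · intro u hu
        have h1 := (hE u).mul ((hx u (le_trans hTa hu)).add_const (ε/2))
        refine h1.congr_deriv ?_; ring
      · intro u hu
        have := hT₀ u (le_trans (le_max_right _ _) hu)
        rw [Real.dist_eq, sub_zero] at this
        have h6 := (abs_lt.1 this).1
        have hepos := Real.exp_pos (b*u)
        nlinarith [mul_pos hepos (show 0 < g u + b*ε/2 by linarith)]
    have h1 := hmono self_mem_Ici ht ht
    have h2 : x t + ε/2 = (Real.exp (b*t) * (x t + ε/2)) * Real.exp (-(b*t)) := by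
      calc x t + ε/2 = (x t + ε/2) * (Real.exp (b*t) * Real.exp (-(b*t))) := by
            rw [hEinv, mul_one]
        _ = (Real.exp (b*t) * (x t + ε/2)) * Real.exp (-(b*t)) := by ring
    rw [h2]
    exact mul_le_mul_of_nonneg_right h1 (Real.exp_nonneg _)
  -- exp decay
  have hdecay : Tendsto (fun t : ℝ => Real.exp (-(b*t))) atTop (nhds 0) := by
    have h1 : Tendsto (fun t : ℝ => b * t) atTop atTop :=
      Tendsto.const_mul_atTop hb tendsto_id
    have := Real.tendsto_exp_neg_atTop_nhds_zero.comp h1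
    exact this
  set c₁ := Real.exp (b*T) * (x T - ε/2)
  set c₂ := Real.exp (b*T) * (x T + ε/2)
  have hc : Tendsto (fun t : ℝ => (|c₁| + |c₂|) * Real.exp (-(b*t))) atTop (nhds 0) := by
    simpa using hdecay.const_mul (|c₁| + |c₂|)
  have hc2 : ∀ᶠ t in atTop, (|c₁| + |c₂|) * Real.exp (-(b*t)) < ε/2 := by
    have := hc.eventually (eventually_lt_nhds (show (0:ℝ) < ε/2 by positivity))
    exact this
  obtain ⟨T₁, hT₁⟩ := (eventually_atTop).1 hc2
  refine ⟨max T T₁, fun t ht => ?_⟩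
  have h1 := hup t (le_trans (le_max_left _ _) ht)
  have h2 := hlo t (le_trans (le_max_left _ _) ht)
  have h3 := hT₁ t (le_trans (le_max_right _ _) ht)
  have hn : 0 ≤ Real.exp (-(b*t)) := Real.exp_nonneg _
  have ha1 : c₁ * Real.exp (-(b*t)) ≤ |c₁| * Real.exp (-(b*t)) :=
    mul_le_mul_of_nonneg_right (le_abs_self _) hn
  have ha2 : -(|c₂| * Real.exp (-(b*t))) ≤ c₂ * Real.exp (-(b*t)) := by
    have := mul_le_mul_of_nonneg_right (neg_abs_le c₂) hn
    simpa using this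
  have hab1 : 0 ≤ |c₁| * Real.exp (-(b*t)) := by positivity
  have hab2 : 0 ≤ |c₂| * Real.exp (-(b*t)) := by positivity
  rw [Real.dist_eq, sub_zero, abs_lt]
  constructor <;> nlinarith

lemma ent_ineq {aa x : ℝ} (ha : 0 < aa) (hx : 0 < x) :
    aa - aa*Real.log aa ≤ x - aa*Real.log x := by
  have h := Real.log_le_sub_one_of_pos (show 0 < x/aa by positivity)
  rw [Real.log_div hx.ne' ha.ne'] at h
  have h2 := mul_le_mul_of_nonneg_left h ha.le
  have hxa : aa * (x/aa - 1) = x - aa := by field_simp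
  nlinarith

set_option maxRecDepth 10000 in
lemma row_zero_spectrum {A : Matrix (Fin 5) (Fin 5) ℝ} {lam : ℝ} (i : Fin 5)
    (h : ∀ j, (algebraMap ℝ (Matrix (Fin 5) (Fin 5) ℝ) lam - A) i j = 0) :
    lam ∈ spectrum ℝ A := by
  rw [spectrum.mem_iff]
  intro hu
  rw [Matrix.isUnit_iff_isUnit_det, Matrix.det_eq_zero_of_row_eq_zero i h] at hu
  exact not_isUnit_zero hu

lemma lyap_identity (c μ p m dd S₁ I₁ s i x : ℝ) (hs : s ≠ 0) (hi : i ≠ 0) :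
    ((c*S₁*I₁ + μ*S₁) - c*s*i - μ*s) - S₁*(((c*S₁*I₁ + μ*S₁) - c*s*i - μ*s)/s)
      + ((c*s*i - p*x*i - (c*S₁ - μ)*i - μ*i) - I₁*((c*s*i - p*x*i - (c*S₁ - μ)*i - μ*i)/i))
      + (p*x*i - m*x - dd*x - μ*x)
    = -((μ + c*I₁)*(s - S₁)^2/s + (m + dd + μ - p*I₁)*x) := by
  field_simp
  ring

set_option maxHeartbeats 4000000 in
/-- For the simplified SICMR system: if
`1 < ℛ₀ ≤ 1 + c(m+d+μ)/(μp)`, the boundary equilibrium `E₁` is globally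
asymptotically stable in `Ω` off the `S`-axis (every solution with initial
value in `Ω` and `I(0) > 0` converges to `E₁`); moreover, if
`ℛ₀ > 1 + c(m+d+μ)/(μp)`, then the Jacobian at `E₁` has the positive
eigenvalue `pI₁ − (m+d+μ)`, so `E₁` is linearly unstable. -/
theorem simplified_sicmr_boundary_stability
    (α c μ γ p m d q : ℝ)
    (hα : 0 < α) (hc : 0 < c) (hμ : 0 < μ) (hγ : 0 < γ) (hp : 0 < p)
    (hm : 0 < m) (hd : 0 < d) (hq : 0 < q)
    (R₀ I₁ : ℝ)
    (hR₀ : R₀ = c * α / (μ * (μ + γ)))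
    (hI₁ : I₁ = μ / c * (R₀ - 1)) :
    (1 < R₀ → R₀ ≤ 1 + c * (m + d + μ) / (μ * p) →
      ∀ S I C M R : ℝ → ℝ,
        (∀ t, 0 ≤ t → HasDerivAt S (α - c * S t * I t - μ * S t) t) →
        (∀ t, 0 ≤ t → HasDerivAt I
          (c * S t * I t - p * C t * I t - γ * I t - μ * I t) t) →
        (∀ t, 0 ≤ t → HasDerivAt C
          (p * C t * I t - m * C t - d * C t - μ * C t) t) →
        (∀ t, 0 ≤ t → HasDerivAt M (m * C t - q * M t - μ * M t) t) →
        (∀ t, 0 ≤ t → HasDerivAt R (q * M t + γ * I t - μ * R t) t) →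
        (0 ≤ S 0 ∧ 0 ≤ I 0 ∧ 0 ≤ C 0 ∧ 0 ≤ M 0 ∧ 0 ≤ R 0 ∧
          S 0 + I 0 + C 0 + M 0 + R 0 ≤ α / μ) →
        0 < I 0 →
        Tendsto (fun t => (S t, I t, C t, M t, R t)) atTop
          (nhds ((μ + γ) / c, μ / c * (R₀ - 1), (0 : ℝ), (0 : ℝ),
            γ / c * (R₀ - 1)))) ∧
    (R₀ > 1 + c * (m + d + μ) / (μ * p) →
      0 < p * I₁ - (m + d + μ) ∧
      p * I₁ - (m + d + μ) ∈ spectrum ℝ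
        (!![-(c * I₁) - μ, -(μ + γ), 0, 0, 0;
            c * I₁, 0, -(p * I₁), 0, 0;
            0, 0, p * I₁ - (m + d + μ), 0, 0;
            0, 0, m, -(q + μ), 0;
            0, γ, 0, q, -μ] : Matrix (Fin 5) (Fin 5) ℝ)) := by
  constructor
  · ------------------------------------------------------------------
    -- Part 1 : global stability
    ------------------------------------------------------------------
    intro hR1 hR2 S I C M R hS hI hC hM hR hΩ hI00
    obtain ⟨hS0, hI0, hC0, hM0, hR0, hN0⟩ := hΩ
    set S₁ : ℝ := (μ + γ) / c with hS₁def
    have hS₁pos : 0 < S₁ := div_pos (by linarith) hc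
    have hcS₁ : c * S₁ = μ + γ := by rw [hS₁def]; field_simp
    have hγeq : γ = c * S₁ - μ := by linarith
    have hI₁pos : 0 < I₁ := by
      rw [hI₁]
      have h1 : 0 < R₀ - 1 := by linarith
      positivity
    have hRα : R₀ * (μ * (μ + γ)) = c * α := by rw [hR₀]; field_simp
    have hαeq : α = c * S₁ * I₁ + μ * S₁ := by
      rw [hI₁, hS₁def]
      field_simp
      linear_combination -hRα
    have hk : 0 ≤ m + d + μ - p * I₁ := by
      have h2 : R₀ - 1 ≤ c * (m + d + μ) / (μ * p) := by linarith
      have h3 : (R₀ - 1) * (μ * p) ≤ c * (m + d + μ) := by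
        rw [← le_div_iff₀ (by positivity)]; exact h2
      have h4 : p * I₁ ≤ m + d + μ := by
        rw [hI₁, show p * (μ / c * (R₀ - 1)) = (R₀ - 1) * (μ * p) / c by ring,
          div_le_iff₀ hc]
        nlinarith
      linarith
    have hexp : ∀ b u : ℝ, HasDerivAt (fun v => Real.exp (b * v)) (Real.exp (b * u) * b) u :=
      fun b u => by simpa using ((hasDerivAt_id u).const_mul b).exp
    -- positivity of S
    have hAcont : ∀ t, (0:ℝ) ≤ t → ContinuousAt (fun u => c * I u + μ) t :=
      fun t ht => ((hI t ht).continuousAt.const_mul c).add continuousAt_const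
    obtain ⟨A, hA0, hA⟩ := exists_antideriv hAcont
    have hSA : ∀ t, (0:ℝ) ≤ t →
        HasDerivAt (fun u => S u * Real.exp (A u)) (α * Real.exp (A t)) t := by
      intro t ht
      have h1 := (hS t ht).mul ((hA t ht).exp)
      refine h1.congr_deriv ?_
      ring
    have hSmono := strictMonoOn_Ici hSA (fun t _ => by positivity)
    have hSpos : ∀ t, 0 < t → 0 < S t := by
      intro t ht
      have h2 := hSmono self_mem_Ici (show t ∈ Set.Ici (0:ℝ) from ht.le) ht
      simp only at h2
      nlinarith [Real.exp_pos (A t), Real.exp_pos (A 0),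
        mul_nonneg hS0 (Real.exp_pos (A 0)).le]
    have hSnn : ∀ t, 0 ≤ t → 0 ≤ S t := by
      intro t ht
      rcases eq_or_lt_of_le ht with h | h
      · rw [← h]; exact hS0
      · exact (hSpos t h).le
    -- positivity of I
    have hBcont : ∀ t, (0:ℝ) ≤ t → ContinuousAt (fun u => c * S u - p * C u - γ - μ) t :=
      fun t ht => (((hS t ht).continuousAt.const_mul c).sub
        ((hC t ht).continuousAt.const_mul p)).sub continuousAt_const |>.sub continuousAt_const
    obtain ⟨B, hB0, hB⟩ := exists_antideriv hBcont
    have hIB : ∀ t, (0:ℝ) ≤ t →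
        HasDerivAt (fun u => I u * Real.exp (-B u)) 0 t := by
      intro t ht
      have h1 := (hI t ht).mul (((hB t ht).neg).exp)
      refine h1.congr_deriv ?_
      ring
    have hIconst := constOn_Ici hIB (fun t _ => rfl)
    have hIpos : ∀ t, 0 ≤ t → 0 < I t := by
      intro t ht
      have h1 : I t * Real.exp (-B t) = I 0 * Real.exp (-B 0) := hIconst t ht
      nlinarith [Real.exp_pos (-B t), Real.exp_pos (-B 0),
        mul_pos hI00 (Real.exp_pos (-B 0))]
    -- nonnegativity of C
    have hDcont : ∀ t, (0:ℝ) ≤ t → ContinuousAt (fun u => p * I u - m - d - μ) t :=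
      fun t ht => (((hI t ht).continuousAt.const_mul p).sub
        continuousAt_const).sub continuousAt_const |>.sub continuousAt_const
    obtain ⟨D, hD0, hD⟩ := exists_antideriv hDcont
    have hCB : ∀ t, (0:ℝ) ≤ t →
        HasDerivAt (fun u => C u * Real.exp (-D u)) 0 t := by
      intro t ht
      have h1 := (hC t ht).mul (((hD t ht).neg).exp)
      refine h1.congr_deriv ?_
      ring
    have hCconst := constOn_Ici hCB (fun t _ => rfl)
    have hCnn : ∀ t, 0 ≤ t → 0 ≤ C t := by
      intro t ht
      have h1 : C t * Real.exp (-D t) = C 0 * Real.exp (-D 0) := hCconst t ht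
      nlinarith [Real.exp_pos (-D t), Real.exp_pos (-D 0),
        mul_nonneg hC0 (Real.exp_pos (-D 0)).le]
    -- nonnegativity of M
    have hFM : ∀ t, (0:ℝ) ≤ t →
        HasDerivAt (fun u => M u * Real.exp ((q+μ) * u))
          (m * C t * Real.exp ((q+μ)*t)) t := by
      intro t ht
      have h1 := (hM t ht).mul (hexp (q+μ) t)
      refine h1.congr_deriv ?_
      ring
    have hMmono := monoOn_Ici hFM (fun t ht =>
      mul_nonneg (mul_nonneg hm.le (hCnn t ht)) (Real.exp_pos _).le)
    have hMnn : ∀ t, 0 ≤ t → 0 ≤ M t := by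
      intro t ht
      have h1 : M 0 * Real.exp ((q+μ)*0) ≤ M t * Real.exp ((q+μ)*t) :=
        hMmono self_mem_Ici (show t ∈ Set.Ici (0:ℝ) from ht) ht
      nlinarith [Real.exp_pos ((q+μ)*t), Real.exp_pos ((q+μ)*0),
        mul_nonneg hM0 (Real.exp_pos ((q+μ)*0)).le]
    -- nonnegativity of R
    have hFR : ∀ t, (0:ℝ) ≤ t →
        HasDerivAt (fun u => R u * Real.exp (μ * u))
          ((q * M t + γ * I t) * Real.exp (μ*t)) t := by
      intro t ht
      have h1 := (hR t ht).mul (hexp μ t)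
      refine h1.congr_deriv ?_
      ring
    have hRmono := monoOn_Ici hFR (fun t ht =>
      mul_nonneg (by nlinarith [hMnn t ht, (hIpos t ht).le]) (Real.exp_pos _).le)
    have hRnn : ∀ t, 0 ≤ t → 0 ≤ R t := by
      intro t ht
      have h1 : R 0 * Real.exp (μ*0) ≤ R t * Real.exp (μ*t) :=
        hRmono self_mem_Ici (show t ∈ Set.Ici (0:ℝ) from ht) ht
      nlinarith [Real.exp_pos (μ*t), Real.exp_pos (μ*0),
        mul_nonneg hR0 (Real.exp_pos (μ*0)).le]
    -- total population bound
    have hG : ∀ t, (0:ℝ) ≤ t →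
        HasDerivAt (fun u => Real.exp (μ*u) * ((S u + I u + C u + M u + R u) - α/μ))
          (Real.exp (μ*t) * (-(d * C t))) t := by
      intro t ht
      have h1 := (hexp μ t).mul
        (((((hS t ht).add (hI t ht)).add (hC t ht)).add (hM t ht)).add (hR t ht) |>.sub_const (α/μ))
      refine h1.congr_deriv ?_
      field_simp
      simp only [Pi.add_apply]
      ring
    have hGanti := antiOn_Ici hG (fun t ht => by
      nlinarith [Real.exp_pos (μ*t), mul_nonneg hd.le (hCnn t ht),
        mul_nonneg (mul_nonneg hd.le (hCnn t ht)) (Real.exp_pos (μ*t)).le])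
    have hNle : ∀ t, 0 ≤ t → S t + I t + C t + M t + R t ≤ α/μ := by
      intro t ht
      have h1 : Real.exp (μ*t) * ((S t + I t + C t + M t + R t) - α/μ) ≤
          Real.exp (μ*0) * ((S 0 + I 0 + C 0 + M 0 + R 0) - α/μ) :=
        hGanti self_mem_Ici (show t ∈ Set.Ici (0:ℝ) from ht) ht
      nlinarith [Real.exp_pos (μ*t), Real.exp_pos (μ*0)]
    have hSle : ∀ t, 0 ≤ t → S t ≤ α/μ := by
      intro t ht
      have := hNle t ht
      have := hIpos t ht; have := hCnn t ht; have := hMnn t ht; have := hRnn t ht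
      linarith
    have hIle : ∀ t, 0 ≤ t → I t ≤ α/μ := by
      intro t ht
      have := hNle t ht
      have := hSnn t ht; have := hCnn t ht; have := hMnn t ht; have := hRnn t ht
      linarith
    have hCle : ∀ t, 0 ≤ t → C t ≤ α/μ := by
      intro t ht
      have := hNle t ht
      have := hSnn t ht; have := hIpos t ht; have := hMnn t ht; have := hRnn t ht
      linarith
    have hSpos1 : ∀ t, (1:ℝ) ≤ t → 0 < S t := fun t ht => hSpos t (by linarith)
    -- the Lyapunov function
    have hW : ∀ t, (1:ℝ) ≤ t →
        HasDerivAt (fun u => S u - S₁ * Real.log (S u) + (I u - I₁ * Real.log (I u)) + C u)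
          (-((μ + c*I₁) * (S t - S₁)^2 / S t + (m + d + μ - p*I₁) * C t)) t := by
      intro t ht
      have h0 : (0:ℝ) ≤ t := by linarith
      have hSne := (hSpos1 t ht).ne'
      have hIne := (hIpos t h0).ne'
      have h1 := (((hS t h0).sub (((hS t h0).log hSne).const_mul S₁)).add
        ((hI t h0).sub (((hI t h0).log hIne).const_mul I₁))).add (hC t h0)
      refine h1.congr_deriv ?_
      rw [hαeq, hγeq]
      exact (lyap_identity c μ p m d S₁ I₁ (S t) (I t) (C t) hSne hIne)
    have hρnn : ∀ t, (1:ℝ) ≤ t →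
        0 ≤ (μ + c*I₁) * (S t - S₁)^2 / S t + (m + d + μ - p*I₁) * C t := by
      intro t ht
      have h1 := hSpos1 t ht
      have h2 := hCnn t (by linarith)
      have h3 : (0:ℝ) ≤ μ + c*I₁ := by positivity
      exact add_nonneg (div_nonneg (mul_nonneg h3 (sq_nonneg _)) h1.le)
        (mul_nonneg hk h2)
    have hWanti := antiOn_Ici hW (fun t ht => neg_nonpos.2 (hρnn t ht))
    have hWlow : ∀ t, (1:ℝ) ≤ t →
        (S₁ - S₁ * Real.log S₁) + (I₁ - I₁ * Real.log I₁) ≤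
        (fun u => S u - S₁ * Real.log (S u) + (I u - I₁ * Real.log (I u)) + C u) t := by
      intro t ht
      have h1 := ent_ineq hS₁pos (hSpos1 t ht)
      have h2 := ent_ineq hI₁pos (hIpos t (by linarith))
      have h3 := hCnn t (by linarith)
      simp only
      linarith
    obtain ⟨WL, hWL⟩ := tendsto_of_antiOn_bddBelow hWanti hWlow
    -- integral of the dissipation is bounded
    have hρcont : ∀ t, (1:ℝ) ≤ t → ContinuousAt
        (fun u => (μ + c*I₁) * (S u - S₁)^2 / S u + (m + d + μ - p*I₁) * C u) t := by
      intro t ht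
      have h0 : (0:ℝ) ≤ t := by linarith
      exact ((((hS t h0).continuousAt.sub continuousAt_const).pow 2).const_mul
        (μ + c*I₁)).div (hS t h0).continuousAt (hSpos1 t ht).ne' |>.add
        ((hC t h0).continuousAt.const_mul (m + d + μ - p*I₁))
    obtain ⟨P, hP0, hP⟩ := exists_antideriv hρcont
    have hWP := constOn_Ici (F := fun u =>
        (S u - S₁ * Real.log (S u) + (I u - I₁ * Real.log (I u)) + C u) + P u)
      (f := fun _ => 0)
      (fun t ht => by
        have h1 := (hW t ht).add (hP t ht)
        refine h1.congr_deriv ?_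
        ring) (fun _ _ => rfl)
    have hPle : ∀ t, (1:ℝ) ≤ t → P t ≤
        (S 1 - S₁ * Real.log (S 1) + (I 1 - I₁ * Real.log (I 1)) + C 1) -
        ((S₁ - S₁ * Real.log S₁) + (I₁ - I₁ * Real.log I₁)) := by
      intro t ht
      have h1 : (S t - S₁ * Real.log (S t) + (I t - I₁ * Real.log (I t)) + C t) + P t =
          (S 1 - S₁ * Real.log (S 1) + (I 1 - I₁ * Real.log (I 1)) + C 1) + P 1 :=
        hWP t ht
      have h2 := hWlow t ht
      simp only at h2
      rw [hP0] at h1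
      linarith
    -- the squared deviation has bounded integral
    have hf2cont : ∀ t, (1:ℝ) ≤ t → ContinuousAt (fun u => (S u - S₁)^2) t := by
      intro t ht
      have h0 : (0:ℝ) ≤ t := by linarith
      exact ((hS t h0).continuousAt.sub continuousAt_const).pow 2
    obtain ⟨F2, hF20, hF2d⟩ := exists_antideriv hf2cont
    have hκα : (μ/α * (μ + c*I₁)) * α = μ * (μ + c*I₁) := by field_simp
    have hκpos : 0 < μ/α * (μ + c*I₁) := by positivity
    have hQmono := monoOn_Ici (F := fun u => P u - (μ/α * (μ + c*I₁)) * F2 u)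
      (f := fun t => ((μ + c*I₁) * (S t - S₁)^2 / S t + (m + d + μ - p*I₁) * C t) -
        (μ/α * (μ + c*I₁)) * (S t - S₁)^2)
      (fun t ht => (hP t ht).sub ((hF2d t ht).const_mul _))
      (by
        intro t ht
        have h1 := hSpos1 t ht
        have h2 : μ * S t ≤ α := by
          have := hSle t (by linarith)
          rw [le_div_iff₀ hμ] at this
          linarith
        have h3 : 0 ≤ (m + d + μ - p*I₁) * C t := mul_nonneg hk (hCnn t (by linarith))
        have h4 : (μ/α * (μ + c*I₁)) * (S t - S₁)^2 ≤ (μ + c*I₁) * (S t - S₁)^2 / S t := by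
          have hX : 0 ≤ (μ + c*I₁) * (S t - S₁)^2 :=
            mul_nonneg (by positivity) (sq_nonneg _)
          rw [le_div_iff₀ h1,
            show μ/α * (μ + c*I₁) * (S t - S₁)^2 * S t
              = ((μ + c*I₁) * (S t - S₁)^2) * (μ * S t) / α by ring,
            div_le_iff₀ hα]
          nlinarith [mul_le_mul_of_nonneg_left h2 hX]
        linarith)
    have hF2bd : ∀ t, (1:ℝ) ≤ t → F2 t ≤
        ((S 1 - S₁ * Real.log (S 1) + (I 1 - I₁ * Real.log (I 1)) + C 1) -
         ((S₁ - S₁ * Real.log S₁) + (I₁ - I₁ * Real.log I₁))) / (μ/α * (μ + c*I₁)) := by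
      intro t ht
      have h1 : P 1 - (μ/α * (μ + c*I₁)) * F2 1 ≤ P t - (μ/α * (μ + c*I₁)) * F2 t :=
        hQmono self_mem_Ici (show t ∈ Set.Ici (1:ℝ) from ht) ht
      rw [hP0, hF20] at h1
      have h2 := hPle t ht
      rw [le_div_iff₀ hκpos]
      nlinarith
    have hF2mono := monoOn_Ici hF2d (fun t _ => sq_nonneg _)
    obtain ⟨L2, hL2⟩ := tendsto_of_monoOn_bddAbove hF2mono hF2bd
    -- Barbalat: (S - S₁)² → 0
    have habsgS : ∀ t, (0:ℝ) ≤ t → |α - c * S t * I t - μ * S t| ≤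
        α + c*(α/μ)*(α/μ) + μ*(α/μ) := by
      intro t ht
      have h1 := hSle t ht
      have h2 := hIle t ht
      have h3 := hSnn t ht
      have h4 := (hIpos t ht).le
      have h5 : S t * I t ≤ (α/μ)*(α/μ) := mul_le_mul h1 h2 h4 (by positivity)
      have h6 : 0 ≤ S t * I t := mul_nonneg h3 h4
      rw [abs_le]
      constructor <;> nlinarith
    have habsgI : ∀ t, (0:ℝ) ≤ t → |c * S t * I t - p * C t * I t - γ * I t - μ * I t| ≤
        c*(α/μ)*(α/μ) + p*(α/μ)*(α/μ) + γ*(α/μ) + μ*(α/μ) := by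
      intro t ht
      have h1 := hSle t ht
      have h2 := hIle t ht
      have h3 := hSnn t ht
      have h4 := (hIpos t ht).le
      have h5 := hCle t ht
      have h6 := hCnn t ht
      have h7 : S t * I t ≤ (α/μ)*(α/μ) := mul_le_mul h1 h2 h4 (by positivity)
      have h8 : 0 ≤ S t * I t := mul_nonneg h3 h4
      have h9 : C t * I t ≤ (α/μ)*(α/μ) := mul_le_mul h5 h2 h4 (by positivity)
      have h10 : 0 ≤ C t * I t := mul_nonneg h6 h4
      rw [abs_le]
      constructor <;> nlinarith
    have hf2d' : ∀ t, (1:ℝ) ≤ t → HasDerivAt (fun u => (S u - S₁)^2)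
        (2*(S t - S₁)*(α - c * S t * I t - μ * S t)) t := by
      intro t ht
      have h0 : (0:ℝ) ≤ t := by linarith
      have h1 := ((hS t h0).sub_const S₁).pow 2
      refine h1.congr_deriv ?_
      ring
    have hK2pos : 0 < 2*(α/μ + S₁)*(α + c*(α/μ)*(α/μ) + μ*(α/μ)) := by positivity
    have habsf2' : ∀ t, (1:ℝ) ≤ t → |2*(S t - S₁)*(α - c * S t * I t - μ * S t)| ≤
        2*(α/μ + S₁)*(α + c*(α/μ)*(α/μ) + μ*(α/μ)) := by
      intro t ht
      have h0 : (0:ℝ) ≤ t := by linarith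
      have h1 := habsgS t h0
      have h2 : |2*(S t - S₁)| ≤ 2*(α/μ + S₁) := by
        rw [abs_le]
        have := hSle t h0; have := hSnn t h0
        constructor <;> nlinarith
      rw [abs_mul]
      calc |2*(S t - S₁)| * |α - c * S t * I t - μ * S t| ≤
          (2*(α/μ + S₁)) * (α + c*(α/μ)*(α/μ) + μ*(α/μ)) :=
            mul_le_mul h2 h1 (abs_nonneg _) (by positivity)
        _ = 2*(α/μ + S₁)*(α + c*(α/μ)*(α/μ) + μ*(α/μ)) := by ring
    have hf2tend : Tendsto (fun t => (S t - S₁)^2) atTop (nhds 0) :=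
      barbalat hK2pos hF2d (lipOn hf2d' habsf2') hL2
    have hStend : Tendsto S atTop (nhds S₁) := by
      rw [tendsto_iff_dist_tendsto_zero]
      have h2 : Tendsto (fun t => Real.sqrt ((S t - S₁)^2)) atTop (nhds 0) := by
        have h3 := (Real.continuous_sqrt.tendsto 0).comp hf2tend
        simpa [Function.comp_def] using h3
      exact h2.congr (fun t => by rw [Real.sqrt_sq_eq_abs, Real.dist_eq])
    -- S' → 0
    have hgS' : ∀ t, (1:ℝ) ≤ t → HasDerivAt (fun u => α - c * S u * I u - μ * S u)
        (-(c*((α - c * S t * I t - μ * S t) * I t +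
            S t * (c * S t * I t - p * C t * I t - γ * I t - μ * I t)))
          - μ*(α - c * S t * I t - μ * S t)) t := by
      intro t ht
      have h0 : (0:ℝ) ≤ t := by linarith
      have h1 := ((hasDerivAt_const t α).sub
        (((hS t h0).const_mul c).mul (hI t h0))).sub ((hS t h0).const_mul μ)
      refine h1.congr_deriv ?_
      ring
    have hK3pos : 0 < c*((α + c*(α/μ)*(α/μ) + μ*(α/μ))*(α/μ) +
        (α/μ)*(c*(α/μ)*(α/μ) + p*(α/μ)*(α/μ) + γ*(α/μ) + μ*(α/μ))) +
        μ*(α + c*(α/μ)*(α/μ) + μ*(α/μ)) := by positivity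
    have habsgS' : ∀ t, (1:ℝ) ≤ t →
        |(-(c*((α - c * S t * I t - μ * S t) * I t +
            S t * (c * S t * I t - p * C t * I t - γ * I t - μ * I t)))
          - μ*(α - c * S t * I t - μ * S t))| ≤
        c*((α + c*(α/μ)*(α/μ) + μ*(α/μ))*(α/μ) +
        (α/μ)*(c*(α/μ)*(α/μ) + p*(α/μ)*(α/μ) + γ*(α/μ) + μ*(α/μ))) +
        μ*(α + c*(α/μ)*(α/μ) + μ*(α/μ)) := by
      intro t ht
      have h0 : (0:ℝ) ≤ t := by linarith
      have h1 := habsgS t h0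
      have h2 := habsgI t h0
      have h3 : |(α - c * S t * I t - μ * S t) * I t| ≤
          (α + c*(α/μ)*(α/μ) + μ*(α/μ)) * (α/μ) := by
        rw [abs_mul]
        exact mul_le_mul h1 (by rw [abs_of_nonneg (hIpos t h0).le]; exact hIle t h0)
          (abs_nonneg _) (by positivity)
      have h4 : |S t * (c * S t * I t - p * C t * I t - γ * I t - μ * I t)| ≤
          (α/μ) * (c*(α/μ)*(α/μ) + p*(α/μ)*(α/μ) + γ*(α/μ) + μ*(α/μ)) := by
        rw [abs_mul]
        exact mul_le_mul (by rw [abs_of_nonneg (hSnn t h0)]; exact hSle t h0) h2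
          (abs_nonneg _) (by positivity)
      calc |(-(c*((α - c * S t * I t - μ * S t) * I t +
            S t * (c * S t * I t - p * C t * I t - γ * I t - μ * I t)))
          - μ*(α - c * S t * I t - μ * S t))|
          ≤ |c*((α - c * S t * I t - μ * S t) * I t +
            S t * (c * S t * I t - p * C t * I t - γ * I t - μ * I t))| +
            |μ*(α - c * S t * I t - μ * S t)| := by
              rw [show (-(c*((α - c * S t * I t - μ * S t) * I t +
                S t * (c * S t * I t - p * C t * I t - γ * I t - μ * I t)))
                - μ*(α - c * S t * I t - μ * S t)) =
                -((c*((α - c * S t * I t - μ * S t) * I t +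
                S t * (c * S t * I t - p * C t * I t - γ * I t - μ * I t))) +
                μ*(α - c * S t * I t - μ * S t)) by ring, abs_neg]
              exact abs_add_le _ _
        _ ≤ c*((α + c*(α/μ)*(α/μ) + μ*(α/μ))*(α/μ) +
            (α/μ)*(c*(α/μ)*(α/μ) + p*(α/μ)*(α/μ) + γ*(α/μ) + μ*(α/μ))) +
            μ*(α + c*(α/μ)*(α/μ) + μ*(α/μ)) := by
              rw [abs_mul, abs_mul, abs_of_pos hc, abs_of_pos hμ]
              have h5 : |(α - c * S t * I t - μ * S t) * I t +
                  S t * (c * S t * I t - p * C t * I t - γ * I t - μ * I t)| ≤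
                  (α + c*(α/μ)*(α/μ) + μ*(α/μ))*(α/μ) +
                  (α/μ)*(c*(α/μ)*(α/μ) + p*(α/μ)*(α/μ) + γ*(α/μ) + μ*(α/μ)) :=
                le_trans (abs_add_le _ _) (by linarith)
              have h6 := mul_le_mul_of_nonneg_left h5 hc.le
              have h7 := mul_le_mul_of_nonneg_left h1 hμ.le
              linarith
    have hgStend : Tendsto (fun t => α - c * S t * I t - μ * S t) atTop (nhds 0) :=
      barbalat hK3pos (fun t ht => hS t (by linarith)) (lipOn hgS' habsgS') hStend
    -- I → I₁
    have hItend : Tendsto I atTop (nhds I₁) := by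
      have h1 : Tendsto (fun t => (α - μ * S t - (α - c * S t * I t - μ * S t))/(c * S t))
          atTop (nhds ((α - μ * S₁ - 0)/(c * S₁))) :=
        Tendsto.div ((tendsto_const_nhds.sub (hStend.const_mul μ)).sub hgStend)
          (hStend.const_mul c) (by positivity)
      have h2 : (α - μ * S₁ - 0)/(c * S₁) = I₁ := by
        rw [hαeq]
        field_simp
        ring
      rw [h2] at h1
      apply h1.congr'
      filter_upwards [eventually_ge_atTop (1:ℝ)] with t ht
      have h3 := (hSpos1 t ht).ne'
      field_simp
      ring
    -- C converges
    have hlogS : Tendsto (fun t => Real.log (S t)) atTop (nhds (Real.log S₁)) :=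
      ((Real.continuousAt_log hS₁pos.ne').tendsto).comp hStend
    have hlogI : Tendsto (fun t => Real.log (I t)) atTop (nhds (Real.log I₁)) :=
      ((Real.continuousAt_log hI₁pos.ne').tendsto).comp hItend
    have hVSItend : Tendsto (fun t => S t - S₁ * Real.log (S t) + (I t - I₁ * Real.log (I t)))
        atTop (nhds (S₁ - S₁ * Real.log S₁ + (I₁ - I₁ * Real.log I₁))) :=
      (hStend.sub (hlogS.const_mul S₁)).add (hItend.sub (hlogI.const_mul I₁))
    have hCtend : Tendsto C atTop
        (nhds (WL - (S₁ - S₁ * Real.log S₁ + (I₁ - I₁ * Real.log I₁)))) := by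
      have h1 := hWL.sub hVSItend
      apply h1.congr'
      filter_upwards [eventually_ge_atTop (1:ℝ)] with t _
      ring
    have hCinfnn : 0 ≤ WL - (S₁ - S₁ * Real.log S₁ + (I₁ - I₁ * Real.log I₁)) := by
      apply ge_of_tendsto hCtend
      filter_upwards [eventually_ge_atTop (0:ℝ)] with t ht
      exact hCnn t ht
    have hCzero : WL - (S₁ - S₁ * Real.log S₁ + (I₁ - I₁ * Real.log I₁)) = 0 := by
      by_contra hne
      set Ci := WL - (S₁ - S₁ * Real.log S₁ + (I₁ - I₁ * Real.log I₁)) with hCi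
      have hCpos : 0 < Ci := lt_of_le_of_ne hCinfnn (Ne.symm hne)
      have hgItend : Tendsto (fun t => c * S t * I t - p * C t * I t - γ * I t - μ * I t)
          atTop (nhds (-(p * Ci * I₁))) := by
        have h1 : Tendsto (fun t => c * S t * I t - p * C t * I t - γ * I t - μ * I t)
            atTop (nhds (c * S₁ * I₁ - p * Ci * I₁ - γ * I₁ - μ * I₁)) :=
          ((((hStend.const_mul c).mul hItend).sub
            ((hCtend.const_mul p).mul hItend)).sub (hItend.const_mul γ)).sub
            (hItend.const_mul μ)
        have h2 : c * S₁ * I₁ - p * Ci * I₁ - γ * I₁ - μ * I₁ = -(p * Ci * I₁) := by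
          linear_combination I₁ * hcS₁
        rw [h2] at h1
        exact h1
      have hβpos : 0 < p * Ci * I₁ / 2 := by positivity
      have hev : ∀ᶠ t in atTop,
          c * S t * I t - p * C t * I t - γ * I t - μ * I t < -(p * Ci * I₁ / 2) :=
        hgItend.eventually (eventually_lt_nhds (by linarith))
      obtain ⟨T, hT⟩ := eventually_atTop.1 hev
      set β := p * Ci * I₁ / 2 with hβ
      set T' := max T 1 with hT'
      have hanti : AntitoneOn (fun u => I u + β * u) (Set.Ici T') := by
        apply antiOn_Ici (f := fun t =>
          (c * S t * I t - p * C t * I t - γ * I t - μ * I t) + β)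
        · intro t ht
          have h0 : (0:ℝ) ≤ t := le_trans (le_trans zero_le_one (le_max_right T 1)) ht
          exact (hI t h0).add (by simpa using (hasDerivAt_id t).const_mul β)
        · intro t ht
          have := hT t (le_trans (le_max_left T 1) ht)
          linarith
      set t₀ := max T' ((I T' + β * T')/β + 1) with ht₀
      have h1 : T' ≤ t₀ := le_max_left _ _
      have h2 : I t₀ + β * t₀ ≤ I T' + β * T' :=
        hanti self_mem_Ici (show t₀ ∈ Set.Ici T' from h1) h1
      have h3 : (I T' + β * T')/β + 1 ≤ t₀ := le_max_right _ _
      have h4 : I T' + β * T' + β ≤ β * t₀ := by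
        have h5 := mul_le_mul_of_nonneg_left h3 hβpos.le
        have h6 : β * ((I T' + β * T')/β + 1) = I T' + β * T' + β := by
          field_simp
        linarith
      have h7 : (1:ℝ) ≤ T' := le_max_right T 1
      have h8 := hIpos t₀ (by linarith)
      linarith
    rw [hCzero] at hCtend
    -- M → 0
    have hMtend : Tendsto M atTop (nhds 0) := by
      apply lin_tendsto (a := 0) (show (0:ℝ) < q + μ by linarith) (g := fun t => m * C t)
      · intro t ht
        have h1 := hM t ht
        convert h1 using 1
        ring
      · simpa using hCtend.const_mul m
    -- R → γI₁/μ
    have hxtend : Tendsto (fun t => R t - γ * I₁ / μ) atTop (nhds 0) := by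
      apply lin_tendsto (a := 0) hμ (g := fun t => q * M t + γ * I t - γ * I₁)
      · intro t ht
        have h1 := (hR t ht).sub_const (γ * I₁ / μ)
        refine h1.congr_deriv ?_
        field_simp
        ring
      · have h1 : Tendsto (fun t => q * M t + γ * I t - γ * I₁) atTop
            (nhds (q * 0 + γ * I₁ - γ * I₁)) :=
          ((hMtend.const_mul q).add (hItend.const_mul γ)).sub tendsto_const_nhds
        simpa using h1
    have hRtend : Tendsto R atTop (nhds (γ * I₁ / μ)) := by
      have h1 := hxtend.add_const (γ * I₁ / μ)
      simpa using h1
    -- assemble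
    have hfin := Tendsto.prodMk_nhds hStend (Tendsto.prodMk_nhds hItend
      (Tendsto.prodMk_nhds hCtend (Tendsto.prodMk_nhds hMtend hRtend)))
    have heq : ((μ + γ)/c, μ/c*(R₀ - 1), (0:ℝ), (0:ℝ), γ/c*(R₀ - 1)) =
        (S₁, I₁, (0:ℝ), (0:ℝ), γ * I₁ / μ) := by
      rw [hS₁def, hI₁]
      have h1 : γ * (μ / c * (R₀ - 1)) / μ = γ/c*(R₀ - 1) := by
        field_simp
      rw [h1]
    rw [heq]
    exact hfin
  · ------------------------------------------------------------------
    -- Part 2 : instability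
    ------------------------------------------------------------------
    intro hR
    have h1 : 0 < p * I₁ - (m + d + μ) := by
      rw [hI₁]
      have h2 : c * (m + d + μ) / (μ * p) < R₀ - 1 := by linarith
      have h3 : c * (m + d + μ) < (R₀ - 1) * (μ * p) := by
        rw [div_lt_iff₀ (by positivity)] at h2; linarith
      rw [sub_pos]
      rw [show p * (μ / c * (R₀ - 1)) = (R₀ - 1) * (μ * p) / c by ring]
      rw [lt_div_iff₀ hc]
      linarith
    refine ⟨h1, row_zero_spectrum 2 ?_⟩
    intro j
    fin_cases j <;>
      · simp only [Matrix.sub_apply, Matrix.algebraMap_matrix_apply]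
        norm_num [Fin.ext_iff, Matrix.cons_val_two, Matrix.vecHead, Matrix.vecTail]
end
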